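/- arXiv:2001.11740 — 3 statements merged into one kernel-verified Lean document; each statement's English description precedes it below -/
import Mathlib

section
/- EXP-SPT holds if and only if lim_{j→∞} λ_j = 0, lim_{j→∞} γ_j = 0, and B := limsup_{ε→0⁺} d(ε)·log j(ε) / log log ε⁻¹ < ∞. Moreover, if these three conditions hold, then the exponent p* of EXP-SPT equals B. -/
open Filter Real Set Topology
open scoped ENNReal NNReal

noncomputable section

/-- The weighted eigenvalues `λ_{k,j}`: `1` if `j = 1`, and `γ_k · λ_j` if `j ≥ 2`. -/
def lamKJ (γ lam : ℕ → ℝ) (k j : ℕ) : ℝ := if j = 1 then 1 else γ k * lam j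

/-- The information complexity `n(ε,d)`: the extended-natural cardinality of the set of
`d`-tuples of positive integers `(n_1,…,n_d)` with `λ_{1,n_1} ⋯ λ_{d,n_d} > ε²`. -/
def infoN (γ lam : ℕ → ℝ) (ε : ℝ) (d : ℕ) : ℕ∞ :=
  {n : Fin d → ℕ | (∀ i, 1 ≤ n i) ∧ ε ^ 2 < ∏ i, lamKJ γ lam (i.1 + 1) (n i)}.encard

/-- EXP-SPT with a given exponent `p`: there is `C ≥ 0` with
`n(ε,d) ≤ C (1 + log ε⁻¹)^p` for all `d ≥ 1` and `ε ∈ (0,1]`. -/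
def ExpSPTwith (γ lam : ℕ → ℝ) (p : ℝ) : Prop :=
  ∃ C : ℝ, 0 ≤ C ∧ ∀ d : ℕ, 1 ≤ d → ∀ ε : ℝ, 0 < ε → ε ≤ 1 →
    (infoN γ lam ε d : ℝ≥0∞) ≤ ENNReal.ofReal (C * (1 + Real.log ε⁻¹) ^ p)

/-- Exponential strong polynomial tractability. -/
def ExpSPT (γ lam : ℕ → ℝ) : Prop := ∃ p : ℝ, 0 ≤ p ∧ ExpSPTwith γ lam p

/-- Exponential polynomial tractability: there are `C, q, p ≥ 0` with
`n(ε,d) ≤ C d^q (1 + log ε⁻¹)^p` for all `d ≥ 1` and `ε ∈ (0,1]`. -/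
def ExpPT (γ lam : ℕ → ℝ) : Prop :=
  ∃ C q p : ℝ, 0 ≤ C ∧ 0 ≤ q ∧ 0 ≤ p ∧ ∀ d : ℕ, 1 ≤ d → ∀ ε : ℝ, 0 < ε → ε ≤ 1 →
    (infoN γ lam ε d : ℝ≥0∞) ≤ ENNReal.ofReal (C * (d : ℝ) ^ q * (1 + Real.log ε⁻¹) ^ p)

/-- EXP-QPT with a given exponent `t`. -/
def ExpQPTwith (γ lam : ℕ → ℝ) (t : ℝ) : Prop :=
  ∃ C : ℝ, 0 ≤ C ∧ ∀ d : ℕ, 1 ≤ d → ∀ ε : ℝ, 0 < ε → ε ≤ 1 →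
    (infoN γ lam ε d : ℝ≥0∞) ≤
      ENNReal.ofReal (C * Real.exp (t * (1 + Real.log d) * (1 + Real.log (1 + Real.log ε⁻¹))))

/-- Exponential quasi-polynomial tractability. -/
def ExpQPT (γ lam : ℕ → ℝ) : Prop := ∃ t : ℝ, 0 ≤ t ∧ ExpQPTwith γ lam t

/-- Exponential `(s,t)`-weak tractability:
`log max(1, n(ε,d)) / (d^t + (1 + log ε⁻¹)^s) → 0` as `d + ε⁻¹ → ∞`
(in particular `n(ε,d)` is finite for all such `d, ε`). -/
def ExpSTWT (γ lam : ℕ → ℝ) (s t : ℝ) : Prop :=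
  ∀ δ : ℝ, 0 < δ → ∃ T : ℝ, ∀ d : ℕ, 1 ≤ d → ∀ ε : ℝ, 0 < ε → ε ≤ 1 →
    T ≤ (d : ℝ) + ε⁻¹ →
    ∃ N : ℕ, infoN γ lam ε d = (N : ℕ∞) ∧
      Real.log (max 1 (N : ℝ)) / ((d : ℝ) ^ t + (1 + Real.log ε⁻¹) ^ s) < δ

/-- `j(ε) = max { j ≥ 1 : λ_j > ε² }` (a well-defined maximum when `λ_j → 0`). -/
def jEps (lam : ℕ → ℝ) (ε : ℝ) : ℕ := sSup {j : ℕ | 1 ≤ j ∧ ε ^ 2 < lam j}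

/-- `d(ε) = max { d ≥ 1 : γ_d > ε² }`, with `d(ε) = 0` if `γ_1 ≤ ε²`
(a well-defined maximum when `γ_d → 0`). -/
def dEps (γ : ℕ → ℝ) (ε : ℝ) : ℕ := sSup {d : ℕ | 1 ≤ d ∧ ε ^ 2 < γ d}

namespace StmtAux

/-- The function whose limsup is `B`. -/
def fB (γ lam : ℕ → ℝ) (ε : ℝ) : ℝ :=
  (dEps γ ε : ℝ) * Real.log (jEps lam ε) / Real.log (Real.log ε⁻¹)

lemma fB_def (γ lam : ℕ → ℝ) :
    (fun ε => (dEps γ ε : ℝ) * Real.log (jEps lam ε) / Real.log (Real.log ε⁻¹)) = fB γ lam :=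
  rfl

variable {γ lam : ℕ → ℝ}

lemma lam_le_one (hlam_anti : AntitoneOn lam (Set.Ici 1)) (hlam1 : lam 1 = 1)
    {j : ℕ} (hj : 1 ≤ j) : lam j ≤ 1 := by
  have := hlam_anti (Set.mem_Ici.mpr (le_refl 1)) (Set.mem_Ici.mpr hj) hj
  simpa [hlam1] using this

lemma lamKJ_nonneg (hγ_pos : ∀ j, 1 ≤ j → 0 < γ j) (hlam_nonneg : ∀ j, 1 ≤ j → 0 ≤ lam j)
    {k j : ℕ} (hk : 1 ≤ k) (hj : 1 ≤ j) : 0 ≤ lamKJ γ lam k j := by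
  unfold lamKJ; split
  · norm_num
  · exact mul_nonneg (hγ_pos k hk).le (hlam_nonneg j hj)

lemma lamKJ_le_one (hlam_anti : AntitoneOn lam (Set.Ici 1)) (hlam1 : lam 1 = 1)
    (hlam_nonneg : ∀ j, 1 ≤ j → 0 ≤ lam j)
    (hγ_pos : ∀ j, 1 ≤ j → 0 < γ j) (hγ_le : ∀ j, 1 ≤ j → γ j ≤ 1)
    {k j : ℕ} (hk : 1 ≤ k) (hj : 1 ≤ j) : lamKJ γ lam k j ≤ 1 := by
  unfold lamKJ; split
  · exact le_refl 1
  · calc γ k * lam j ≤ 1 * 1 :=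
        mul_le_mul (hγ_le k hk) (lam_le_one hlam_anti hlam1 hj) (hlam_nonneg j hj) zero_le_one
    _ = 1 := one_mul 1

/-- Every single factor of a counted tuple exceeds `ε²`. -/
lemma factor_gt (hlam_anti : AntitoneOn lam (Set.Ici 1)) (hlam1 : lam 1 = 1)
    (hlam_nonneg : ∀ j, 1 ≤ j → 0 ≤ lam j)
    (hγ_pos : ∀ j, 1 ≤ j → 0 < γ j) (hγ_le : ∀ j, 1 ≤ j → γ j ≤ 1)
    {ε : ℝ} {d : ℕ} {n : Fin d → ℕ} (hn1 : ∀ i, 1 ≤ n i)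
    (h : ε ^ 2 < ∏ i, lamKJ γ lam (i.1 + 1) (n i)) (i : Fin d) :
    ε ^ 2 < lamKJ γ lam (i.1 + 1) (n i) := by
  refine lt_of_lt_of_le h ?_
  rw [← Finset.mul_prod_erase Finset.univ (fun i => lamKJ γ lam (i.1 + 1) (n i))
    (Finset.mem_univ i)]
  have h1 : ∏ j ∈ Finset.univ.erase i, lamKJ γ lam (j.1 + 1) (n j) ≤ 1 :=
    Finset.prod_le_one
      (fun j _ => lamKJ_nonneg hγ_pos hlam_nonneg (by omega) (hn1 j))
      (fun j _ => lamKJ_le_one hlam_anti hlam1 hlam_nonneg hγ_pos hγ_le (by omega) (hn1 j))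
  calc lamKJ γ lam (i.1 + 1) (n i) * ∏ j ∈ Finset.univ.erase i, lamKJ γ lam (j.1 + 1) (n j)
      ≤ lamKJ γ lam (i.1 + 1) (n i) * 1 :=
        mul_le_mul_of_nonneg_left h1 (lamKJ_nonneg hγ_pos hlam_nonneg (by omega) (hn1 i))
    _ = lamKJ γ lam (i.1 + 1) (n i) := mul_one _

lemma bddAbove_setOf (f : ℕ → ℝ) (hf : Tendsto f atTop (nhds 0)) {ε : ℝ} (hε : 0 < ε) :
    BddAbove {j : ℕ | 1 ≤ j ∧ ε ^ 2 < f j} := by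
  have h2 : ∀ᶠ j in atTop, f j < ε ^ 2 := by
    have : Set.Iio (ε ^ 2) ∈ nhds (0 : ℝ) := Iio_mem_nhds (by positivity)
    exact hf.eventually this
  obtain ⟨N, hN⟩ := eventually_atTop.mp h2
  refine ⟨N, fun j hj => ?_⟩
  by_contra h'
  push_neg at h'
  exact absurd hj.2 (not_lt.mpr (hN j h'.le).le)

end StmtAux
namespace StmtAux
variable {γ lam : ℕ → ℝ}

/-- Upper counting bound: `n(ε,d) ≤ j(ε) ^ d(ε)`. -/
lemma infoN_le_pow (hlam_anti : AntitoneOn lam (Set.Ici 1)) (hlam1 : lam 1 = 1)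
    (hlam_nonneg : ∀ j, 1 ≤ j → 0 ≤ lam j)
    (hγ_pos : ∀ j, 1 ≤ j → 0 < γ j) (hγ_le : ∀ j, 1 ≤ j → γ j ≤ 1)
    (htl : Tendsto lam atTop (nhds 0)) (hγl : Tendsto γ atTop (nhds 0))
    {ε : ℝ} (hε0 : 0 < ε) (hε1 : ε < 1) (d : ℕ) :
    infoN γ lam ε d ≤ ((jEps lam ε ^ dEps γ ε : ℕ) : ℕ∞) := by
  set J := jEps lam ε with hJdef
  set D := dEps γ ε with hDdef
  have hbJ : BddAbove {j : ℕ | 1 ≤ j ∧ ε ^ 2 < lam j} := bddAbove_setOf lam htl hε0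
  have hbD : BddAbove {j : ℕ | 1 ≤ j ∧ ε ^ 2 < γ j} := bddAbove_setOf γ hγl hε0
  have hJ1 : 1 ≤ J := le_csSup hbJ ⟨le_refl 1, by rw [hlam1]; nlinarith⟩
  set A := {n : Fin d → ℕ | (∀ i, 1 ≤ n i) ∧ ε ^ 2 < ∏ i, lamKJ γ lam (i.1 + 1) (n i)} with hA
  have hmem : ∀ n ∈ A, (∀ i : Fin d, n i ≤ J) ∧ (∀ i : Fin d, D ≤ i.1 → n i = 1) := by
    rintro n ⟨hn1, hn2⟩
    have key := fun i =>
      factor_gt hlam_anti hlam1 hlam_nonneg hγ_pos hγ_le hn1 hn2 i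
    constructor
    · intro i
      rcases eq_or_lt_of_le (hn1 i) with h1 | h2
      · rw [← h1]; exact hJ1
      · have hf := key i
        rw [lamKJ, if_neg (by omega)] at hf
        have hγle1 : γ (i.1 + 1) ≤ 1 := hγ_le _ (by omega)
        have hγpos : 0 < γ (i.1 + 1) := hγ_pos _ (by omega)
        have hlnn : 0 ≤ lam (n i) := hlam_nonneg _ (by omega)
        have : ε ^ 2 < lam (n i) := lt_of_lt_of_le hf (by nlinarith)
        exact le_csSup hbJ ⟨by omega, this⟩
    · intro i hi
      by_contra hne
      have h2 : 2 ≤ n i := by have := hn1 i; omega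
      have hf := key i
      rw [lamKJ, if_neg (by omega)] at hf
      have hlle1 : lam (n i) ≤ 1 := lam_le_one hlam_anti hlam1 (by omega)
      have hγpos : 0 < γ (i.1 + 1) := hγ_pos _ (by omega)
      have hlnn : 0 ≤ lam (n i) := hlam_nonneg _ (by omega)
      have hgt : ε ^ 2 < γ (i.1 + 1) := lt_of_lt_of_le hf (by nlinarith)
      have : i.1 + 1 ≤ D := le_csSup hbD ⟨by omega, hgt⟩
      omega
  have hJpos : 0 < J := hJ1
  set F : (Fin d → ℕ) → (Fin D → Fin J) := fun n k =>
    if h : k.1 < d then ⟨min (n ⟨k.1, h⟩ - 1) (J - 1), by omega⟩ else ⟨0, by omega⟩ with hF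
  have hinj : Set.InjOn F A := by
    rintro n hn m hm hFn
    obtain ⟨hnJ, hnD⟩ := hmem n hn
    obtain ⟨hmJ, hmD⟩ := hmem m hm
    have hn1 := hn.1
    have hm1 := hm.1
    funext i
    by_cases hiD : i.1 < D
    · have hval := congrArg Fin.val (congrFun hFn ⟨i.1, hiD⟩)
      simp only [hF, dif_pos i.2, Fin.eta] at hval
      have h1 := hn1 i; have h2 := hm1 i; have h3 := hnJ i; have h4 := hmJ i
      omega
    · have h1 := hnD i (le_of_not_gt hiD)
      have h2 := hmD i (le_of_not_gt hiD)
      omega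
  have hcard := Set.encard_le_encard_of_injOn (f := F) (fun n _ => Set.mem_univ (F n)) hinj
  rw [Set.encard_univ, ENat.card_eq_coe_fintype_card] at hcard
  simpa [infoN, ← hA, Fintype.card_fun] using hcard

/-- Lower counting bound via full boxes. -/
lemma pow_le_infoN {ε : ℝ} {d J : ℕ} (hJ : 1 ≤ J)
    (hall : ∀ n : Fin d → ℕ, (∀ i, 1 ≤ n i ∧ n i ≤ J) →
      ε ^ 2 < ∏ i, lamKJ γ lam (i.1 + 1) (n i)) :
    ((J ^ d : ℕ) : ℕ∞) ≤ infoN γ lam ε d := by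
  set A := {n : Fin d → ℕ | (∀ i, 1 ≤ n i) ∧ ε ^ 2 < ∏ i, lamKJ γ lam (i.1 + 1) (n i)} with hA
  set G : (Fin d → Fin J) → (Fin d → ℕ) := fun v i => v i + 1 with hG
  have hmaps : Set.MapsTo G Set.univ A := by
    intro v _
    refine ⟨fun i => by simp only [hG]; omega,
      hall (G v) (fun i => ⟨by simp only [hG]; omega, by
        have := (v i).2; simp only [hG]; omega⟩)⟩
  have hinj : Set.InjOn G Set.univ := by
    intro v _ w _ h
    funext i
    have := congrFun h i
    simp only [hG] at this
    exact Fin.ext (by omega)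
  have hcard := Set.encard_le_encard_of_injOn hmaps hinj
  rw [Set.encard_univ, ENat.card_eq_coe_fintype_card] at hcard
  simpa [infoN, ← hA, Fintype.card_fun] using hcard

end StmtAux
namespace StmtAux
variable {γ lam : ℕ → ℝ}

lemma ev_sq_lt {c : ℝ} (hc : 0 < c) : ∀ᶠ ε in nhdsWithin (0:ℝ) (Set.Ioi 0), ε ^ 2 < c := by
  have hmem : Set.Ioo (0:ℝ) (min 1 c) ∈ nhdsWithin (0:ℝ) (Set.Ioi 0) :=
    Ioo_mem_nhdsGT_of_mem ⟨le_refl 0, lt_min one_pos hc⟩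
  filter_upwards [hmem] with ε hε
  obtain ⟨h1, h2⟩ := hε
  have := lt_min_iff.mp h2
  nlinarith [this.1, this.2]

lemma ev_lt {c : ℝ} (hc : 0 < c) : ∀ᶠ ε in nhdsWithin (0:ℝ) (Set.Ioi 0), ε < c := by
  have hmem : Set.Ioo (0:ℝ) c ∈ nhdsWithin (0:ℝ) (Set.Ioi 0) :=
    Ioo_mem_nhdsGT_of_mem ⟨le_refl 0, hc⟩
  filter_upwards [hmem] with ε hε
  exact hε.2

/-- Tuples in the full box `[1,J]^D` have product `> (ε^{2D})²`. -/
lemma prod_gt (hlam_anti : AntitoneOn lam (Set.Ici 1)) (hlam1 : lam 1 = 1)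
    (hγ_anti : AntitoneOn γ (Set.Ici 1))
    (htl : Tendsto lam atTop (nhds 0)) (hγl : Tendsto γ atTop (nhds 0))
    {ε : ℝ} (hε0 : 0 < ε) (hε1 : ε < 1) (hγ1 : ε ^ 2 < γ 1) :
    ∀ n : Fin (dEps γ ε) → ℕ, (∀ i, 1 ≤ n i ∧ n i ≤ jEps lam ε) →
      (ε ^ (2 * dEps γ ε)) ^ 2 < ∏ i, lamKJ γ lam (i.1 + 1) (n i) := by
  set D := dEps γ ε with hDdef
  set J := jEps lam ε with hJdef
  have hbJ : BddAbove {j : ℕ | 1 ≤ j ∧ ε ^ 2 < lam j} := bddAbove_setOf lam htl hε0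
  have hbD : BddAbove {j : ℕ | 1 ≤ j ∧ ε ^ 2 < γ j} := bddAbove_setOf γ hγl hε0
  have hDmem : D ∈ {d : ℕ | 1 ≤ d ∧ ε ^ 2 < γ d} :=
    Nat.sSup_mem ⟨1, ⟨le_refl 1, hγ1⟩⟩ hbD
  have hJmem : J ∈ {j : ℕ | 1 ≤ j ∧ ε ^ 2 < lam j} :=
    Nat.sSup_mem ⟨1, ⟨le_refl 1, by rw [hlam1]; nlinarith⟩⟩ hbJ
  intro n hn
  have hfac : ∀ i : Fin D, ε ^ 4 < lamKJ γ lam (i.1 + 1) (n i) := by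
    intro i
    rcases eq_or_lt_of_le (hn i).1 with h1 | h2
    · rw [lamKJ, if_pos h1.symm]
      exact pow_lt_one₀ hε0.le hε1 (by norm_num)
    · rw [lamKJ, if_neg (by omega)]
      have hγge : γ D ≤ γ (i.1 + 1) := by
        refine hγ_anti (Set.mem_Ici.mpr (by omega)) (Set.mem_Ici.mpr hDmem.1) ?_
        have := i.2; omega
      have hlge : lam J ≤ lam (n i) := by
        refine hlam_anti (Set.mem_Ici.mpr (hn i).1) (Set.mem_Ici.mpr hJmem.1) (hn i).2
      have h1 : ε ^ 2 < γ (i.1 + 1) := lt_of_lt_of_le hDmem.2 hγge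
      have h2 : ε ^ 2 < lam (n i) := lt_of_lt_of_le hJmem.2 hlge
      calc ε ^ 4 = ε ^ 2 * ε ^ 2 := by ring
        _ < γ (i.1 + 1) * lam (n i) := by
            apply mul_lt_mul'' h1 h2 (by positivity) (by positivity)
  haveI : Nonempty (Fin D) :=
    Fin.pos_iff_nonempty.mp (Nat.lt_of_lt_of_le Nat.zero_lt_one hDmem.1)
  calc (ε ^ (2 * D)) ^ 2 = ∏ _i : Fin D, ε ^ 4 := by
        rw [Finset.prod_const, Finset.card_univ, Fintype.card_fin, ← pow_mul, ← pow_mul]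
        congr 1
        ring
    _ < ∏ i, lamKJ γ lam (i.1 + 1) (n i) :=
        Finset.prod_lt_prod_of_nonempty (fun i _ => by positivity) (fun i _ => hfac i)
          Finset.univ_nonempty

/-- The key inequality derived from the SPT estimate. -/
lemma key_ineq (hlam_anti : AntitoneOn lam (Set.Ici 1)) (hlam1 : lam 1 = 1)
    (hγ_anti : AntitoneOn γ (Set.Ici 1))
    (htl : Tendsto lam atTop (nhds 0)) (hγl : Tendsto γ atTop (nhds 0))
    {p C : ℝ} (hC : 1 ≤ C) (hp : 0 ≤ p)
    (hspt : ∀ d : ℕ, 1 ≤ d → ∀ ε : ℝ, 0 < ε → ε ≤ 1 →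
      (infoN γ lam ε d : ℝ≥0∞) ≤ ENNReal.ofReal (C * (1 + Real.log ε⁻¹) ^ p))
    {ε : ℝ} (hε0 : 0 < ε) (hε1 : ε < 1) (hγ1 : ε ^ 2 < γ 1) :
    (dEps γ ε : ℝ) * Real.log (jEps lam ε) ≤
      Real.log C + p * Real.log (1 + 2 * (dEps γ ε) * Real.log ε⁻¹) := by
  set D := dEps γ ε with hDdef
  set J := jEps lam ε with hJdef
  have hbJ : BddAbove {j : ℕ | 1 ≤ j ∧ ε ^ 2 < lam j} := bddAbove_setOf lam htl hε0
  have hbD : BddAbove {j : ℕ | 1 ≤ j ∧ ε ^ 2 < γ j} := bddAbove_setOf γ hγl hε0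
  have hDmem : D ∈ {d : ℕ | 1 ≤ d ∧ ε ^ 2 < γ d} :=
    Nat.sSup_mem ⟨1, ⟨le_refl 1, hγ1⟩⟩ hbD
  have hJmem : J ∈ {j : ℕ | 1 ≤ j ∧ ε ^ 2 < lam j} :=
    Nat.sSup_mem ⟨1, ⟨le_refl 1, by rw [hlam1]; nlinarith⟩⟩ hbJ
  have hD1 : 1 ≤ D := hDmem.1
  have hJ1 : 1 ≤ J := hJmem.1
  set ε' : ℝ := ε ^ (2 * D) with hε'def
  have hε'0 : 0 < ε' := pow_pos hε0 _
  have hε'1 : ε' ≤ 1 := pow_le_one₀ hε0.le hε1.le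
  have hlow : ((J ^ D : ℕ) : ℕ∞) ≤ infoN γ lam ε' D :=
    pow_le_infoN hJ1 (fun n hn =>
      prod_gt hlam_anti hlam1 hγ_anti htl hγl hε0 hε1 hγ1 n hn)
  have hup := hspt D hD1 ε' hε'0 hε'1
  set L := Real.log ε⁻¹ with hLdef
  have hL0 : 0 ≤ L := Real.log_nonneg (one_le_inv_iff₀.mpr ⟨hε0, hε1.le⟩)
  have hlogε' : Real.log ε'⁻¹ = 2 * D * L := by
    rw [hε'def, Real.log_inv, Real.log_pow, hLdef, Real.log_inv]
    push_cast
    ring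
  have hbase : (1:ℝ) ≤ 1 + 2 * D * L := by
    have hD0 : (0:ℝ) ≤ (D:ℝ) := Nat.cast_nonneg D
    nlinarith
  have hR : (0:ℝ) ≤ C * (1 + 2 * D * L) ^ p :=
    mul_nonneg (by linarith) (Real.rpow_nonneg (by linarith) p)
  have hreal : ((J ^ D : ℕ) : ℝ) ≤ C * (1 + 2 * D * L) ^ p := by
    rw [← ENNReal.ofReal_le_ofReal_iff hR, ENNReal.ofReal_natCast]
    calc ((J ^ D : ℕ) : ℝ≥0∞) = (((J ^ D : ℕ) : ℕ∞) : ℝ≥0∞) := by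
          rw [ENat.toENNReal_coe]
      _ ≤ (infoN γ lam ε' D : ℝ≥0∞) := ENat.toENNReal_le.mpr hlow
      _ ≤ ENNReal.ofReal (C * (1 + Real.log ε'⁻¹) ^ p) := hup
      _ = ENNReal.ofReal (C * (1 + 2 * D * L) ^ p) := by rw [hlogε']
  have hJDpos : (0:ℝ) < ((J ^ D : ℕ) : ℝ) := by
    have : 1 ≤ J ^ D := Nat.one_le_pow _ _ hJ1
    exact_mod_cast Nat.lt_of_lt_of_le Nat.zero_lt_one this
  have hlog := Real.log_le_log hJDpos hreal
  rw [Real.log_mul (by linarith) (ne_of_gt (Real.rpow_pos_of_pos (by linarith) p)),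
    Real.log_rpow (by linarith)] at hlog
  calc (D : ℝ) * Real.log J = Real.log ((J ^ D : ℕ) : ℝ) := by
        rw [Nat.cast_pow, Real.log_pow]
    _ ≤ Real.log C + p * Real.log (1 + 2 * D * L) := hlog

end StmtAux
namespace StmtAux
variable {γ lam : ℕ → ℝ}

lemma not_tendsto_exists (f : ℕ → ℝ) (hanti : AntitoneOn f (Set.Ici 1))
    (hnn : ∀ j, 1 ≤ j → 0 ≤ f j) (h : ¬ Tendsto f atTop (nhds 0)) :
    ∃ c : ℝ, 0 < c ∧ ∀ j, 1 ≤ j → c ≤ f j := by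
  set g : ℕ → ℝ := fun n => f (n + 1) with hg
  have hganti : Antitone g := by
    intro a b hab
    exact hanti (Set.mem_Ici.mpr (by omega)) (Set.mem_Ici.mpr (by omega)) (by omega)
  have hbdd : BddBelow (Set.range g) := by
    refine ⟨0, ?_⟩
    rintro _ ⟨n, rfl⟩
    exact hnn _ (by omega)
  have hthe : Tendsto g atTop (nhds (⨅ n, g n)) := tendsto_atTop_ciInf hganti hbdd
  set c := ⨅ n, g n with hc
  have hc0 : 0 ≤ c := le_ciInf (fun n => hnn _ (by omega))
  have hcne : c ≠ 0 := by
    intro h0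
    apply h
    rw [h0] at hthe
    exact (tendsto_add_atTop_iff_nat 1).mp hthe
  refine ⟨c, hc0.lt_of_ne (Ne.symm hcne), fun j hj => ?_⟩
  have h1 := ciInf_le hbdd (j - 1)
  have h2 : g (j - 1) = f j := by rw [hg]; simp only []; congr 1; omega
  rw [h2] at h1
  exact h1

lemma spt_lam_tendsto (hγ_pos : ∀ j, 1 ≤ j → 0 < γ j)
    (hlam_anti : AntitoneOn lam (Set.Ici 1)) (hlam_nonneg : ∀ j, 1 ≤ j → 0 ≤ lam j)
    (h : ExpSPT γ lam) : Tendsto lam atTop (nhds 0) := by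
  by_contra hnot
  obtain ⟨c, hc0, hc⟩ := not_tendsto_exists lam hlam_anti hlam_nonneg hnot
  obtain ⟨p, hp0, C, hC0, hC⟩ := h
  have hγ1 := hγ_pos 1 (le_refl 1)
  set ε : ℝ := min (1/2) (γ 1 * c / 2) with hεdef
  have hε0 : 0 < ε := lt_min (by norm_num) (by positivity)
  have hε1 : ε ≤ 1 := le_trans (min_le_left _ _) (by norm_num)
  have hεsq : ε ^ 2 < γ 1 * c := by
    have h1 : ε ≤ 1/2 := min_le_left _ _
    have h2 : ε ≤ γ 1 * c / 2 := min_le_right _ _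
    nlinarith
  have hinf : infoN γ lam ε 1 = ⊤ := by
    rw [infoN, Set.encard_eq_top_iff]
    refine Set.infinite_of_injective_forall_mem
      (f := fun m : ℕ => (fun _ : Fin 1 => m + 2 : Fin 1 → ℕ)) ?_ ?_
    · intro a b hab
      simpa using congrFun hab 0
    · intro m
      refine ⟨fun i => by show 1 ≤ m + 2; omega, ?_⟩
      rw [Fin.prod_univ_one]
      show ε ^ 2 < lamKJ γ lam (0 + 1) (m + 2)
      rw [lamKJ, if_neg (by omega)]
      calc ε ^ 2 < γ 1 * c := hεsq
        _ ≤ γ (0 + 1) * lam (m + 2) :=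
          mul_le_mul_of_nonneg_left (hc _ (by omega)) hγ1.le
  have hfin := hC 1 (le_refl 1) ε hε0 hε1
  rw [hinf] at hfin
  simp only [ENat.toENNReal_top] at hfin
  exact absurd (lt_of_le_of_lt hfin ENNReal.ofReal_lt_top) (lt_irrefl ⊤)

lemma spt_gam_tendsto (hγ_pos : ∀ j, 1 ≤ j → 0 < γ j)
    (hγ_anti : AntitoneOn γ (Set.Ici 1)) (hlam2 : 0 < lam 2)
    (h : ExpSPT γ lam) : Tendsto γ atTop (nhds 0) := by
  by_contra hnot
  obtain ⟨c, hc0, hc⟩ := not_tendsto_exists γ hγ_anti (fun j hj => (hγ_pos j hj).le) hnot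
  obtain ⟨p, hp0, C, hC0, hC⟩ := h
  set ε : ℝ := min (1/2) (c * lam 2 / 2) with hεdef
  have hε0 : 0 < ε := lt_min (by norm_num) (by positivity)
  have hε1 : ε ≤ 1 := le_trans (min_le_left _ _) (by norm_num)
  have hεsq : ε ^ 2 < c * lam 2 := by
    have h1 : ε ≤ 1/2 := min_le_left _ _
    have h2 : ε ≤ c * lam 2 / 2 := min_le_right _ _
    nlinarith
  have hL0 : 0 ≤ Real.log ε⁻¹ := Real.log_nonneg (one_le_inv_iff₀.mpr ⟨hε0, hε1⟩)
  have hR0 : 0 ≤ C * (1 + Real.log ε⁻¹) ^ p :=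
    mul_nonneg hC0 (Real.rpow_nonneg (by linarith) p)
  set d : ℕ := ⌈C * (1 + Real.log ε⁻¹) ^ p⌉₊ + 1 with hddef
  have hkey : ((d : ℕ∞) : ℝ≥0∞) ≤ ENNReal.ofReal (C * (1 + Real.log ε⁻¹) ^ p) := by
    refine le_trans ?_ (hC d (by omega) ε hε0 hε1)
    apply ENat.toENNReal_le.mpr
    have hmaps : Set.MapsTo (fun (k : Fin d) => (fun i : Fin d => if i = k then 2 else 1))
        Set.univ
        {n : Fin d → ℕ | (∀ i, 1 ≤ n i) ∧ ε ^ 2 < ∏ i, lamKJ γ lam (i.1 + 1) (n i)} := by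
      intro k _
      constructor
      · intro i; dsimp only; split <;> omega
      · have hprod : ∏ i : Fin d, lamKJ γ lam (i.1 + 1) (if i = k then 2 else 1) =
            lamKJ γ lam (k.1 + 1) 2 := by
          rw [Finset.prod_eq_single_of_mem k (Finset.mem_univ k)
            (fun j _ hj => by rw [if_neg hj, lamKJ]; exact if_pos rfl)]
          rw [if_pos rfl]
        dsimp only
        rw [hprod, lamKJ, if_neg (by omega)]
        calc ε ^ 2 < c * lam 2 := hεsq
          _ ≤ γ (k.1 + 1) * lam 2 := mul_le_mul_of_nonneg_right (hc _ (by omega)) hlam2.le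
    have hinj : Set.InjOn (fun (k : Fin d) => (fun i : Fin d => if i = k then 2 else 1))
        Set.univ := by
      intro a _ b _ hab
      by_contra hne
      have hev := congrFun hab a
      dsimp only at hev
      rw [if_pos rfl, if_neg hne] at hev
      exact absurd hev (by norm_num)
    have hcard := Set.encard_le_encard_of_injOn hmaps hinj
    rw [Set.encard_univ, ENat.card_eq_coe_fintype_card, Fintype.card_fin] at hcard
    rw [infoN]
    exact hcard
  have hlast : (d : ℝ) ≤ C * (1 + Real.log ε⁻¹) ^ p := by
    rw [ENat.toENNReal_coe, ← ENNReal.ofReal_natCast] at hkey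
    exact (ENNReal.ofReal_le_ofReal_iff hR0).mp hkey
  have hceil := Nat.le_ceil (C * (1 + Real.log ε⁻¹) ^ p)
  rw [hddef] at hlast
  push_cast at hlast
  linarith
end StmtAux
namespace StmtAux
variable {γ lam : ℕ → ℝ}

lemma log_lin_bound (p : ℝ) (hp : 0 ≤ p) :
    ∃ K : ℝ, 0 ≤ K ∧ ∀ x : ℝ, 0 ≤ x → p * Real.log (1 + x) ≤ Real.log 2 / 2 * x + K := by
  set c : ℝ := Real.log 2 / (2 * (p + 1)) with hcdef
  have hlog2 : 0 < Real.log 2 := Real.log_pos one_lt_two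
  have hc0 : 0 < c := by positivity
  have hlog2le : Real.log 2 ≤ 1 := by
    nlinarith [Real.log_le_sub_one_of_pos (show (0:ℝ) < 2 by norm_num)]
  have hc1 : c ≤ 1 := by
    rw [hcdef, div_le_one (by positivity)]
    nlinarith
  have hlogc : Real.log c ≤ 0 := Real.log_nonpos hc0.le hc1
  refine ⟨p * (c - Real.log c), by nlinarith, fun x hx => ?_⟩
  have h1 : Real.log (c * (1 + x)) ≤ c * (1 + x) - 1 :=
    Real.log_le_sub_one_of_pos (by nlinarith)
  rw [Real.log_mul (ne_of_gt hc0) (by nlinarith)] at h1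
  have h2 : Real.log (1 + x) ≤ c * x + (c - Real.log c) := by nlinarith
  have h3 : p * c ≤ Real.log 2 / 2 := by
    rw [hcdef, mul_div_assoc']
    rw [div_le_div_iff₀ (by positivity) (by norm_num)]
    nlinarith
  nlinarith [mul_le_mul_of_nonneg_left h2 hp, mul_le_mul_of_nonneg_right h3 hx]

def gFun (C p : ℝ) (x : ℝ) : ℝ :=
  (Real.log C + 2 * p * Real.log (Real.log x) + p * Real.log (1 + 2 * x)) / Real.log x

lemma tendsto_gFun (C p : ℝ) : Tendsto (gFun C p) atTop (nhds p) := by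
  have hlogTop : Tendsto Real.log atTop atTop := Real.tendsto_log_atTop
  have h1 : Tendsto (fun x : ℝ => Real.log C / Real.log x) atTop (nhds 0) :=
    tendsto_const_nhds.div_atTop hlogTop
  have h2 : Tendsto (fun x : ℝ => Real.log (Real.log x) / Real.log x) atTop (nhds 0) := by
    have hb : Tendsto (fun y : ℝ => Real.log y / y) atTop (nhds 0) := by
      have := Real.isLittleO_log_id_atTop.tendsto_div_nhds_zero
      simpa using this
    have := hb.comp hlogTop
    simpa [Function.comp_def] using this
  have h3 : Tendsto (fun x : ℝ => Real.log (1 + 2 * x) / Real.log x) atTop (nhds 1) := by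
    have ha : Tendsto (fun x : ℝ => x⁻¹ + 2) atTop (nhds (0 + 2)) :=
      tendsto_inv_atTop_zero.add_const 2
    have hb : Tendsto (fun x : ℝ => Real.log (x⁻¹ + 2)) atTop (nhds (Real.log 2)) := by
      have hcont : ContinuousAt Real.log 2 := Real.continuousAt_log (by norm_num)
      have := hcont.tendsto.comp (by simpa using ha)
      simpa [Function.comp_def] using this
    have hc : Tendsto (fun x : ℝ => Real.log (x⁻¹ + 2) / Real.log x) atTop (nhds 0) :=
      hb.div_atTop hlogTop
    have hd : Tendsto (fun x : ℝ => Real.log (x⁻¹ + 2) / Real.log x + 1) atTop (nhds 1) := by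
      simpa using hc.add_const 1
    refine hd.congr' ?_
    filter_upwards [eventually_gt_atTop 1] with x hx
    have hx0 : x ≠ 0 := by linarith
    have hlx : Real.log x ≠ 0 := ne_of_gt (Real.log_pos hx)
    have hxe : (1:ℝ) + 2 * x = (x⁻¹ + 2) * x := by field_simp
    rw [hxe, Real.log_mul (by positivity) hx0, add_div, div_self hlx]
  have hsum := (h1.add (h2.const_mul (2 * p))).add (h3.const_mul p)
  have heq : (fun x : ℝ => Real.log C / Real.log x +
      2 * p * (Real.log (Real.log x) / Real.log x) +
      p * (Real.log (1 + 2 * x) / Real.log x)) = gFun C p := by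
    funext x
    unfold gFun
    ring
  rw [heq] at hsum
  simpa using hsum

end StmtAux
namespace StmtAux
variable {γ lam : ℕ → ℝ}

lemma tendsto_L : Tendsto (fun ε : ℝ => Real.log ε⁻¹)
    (nhdsWithin (0:ℝ) (Set.Ioi 0)) atTop := by
  have := Real.tendsto_log_atTop.comp (tendsto_inv_nhdsGT_zero (𝕜 := ℝ))
  simpa [Function.comp_def] using this

lemma tendsto_LL : Tendsto (fun ε : ℝ => Real.log (Real.log ε⁻¹))
    (nhdsWithin (0:ℝ) (Set.Ioi 0)) atTop := by
  have := Real.tendsto_log_atTop.comp tendsto_L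
  simpa [Function.comp_def] using this

lemma fB_ev_nonneg : ∀ᶠ ε in nhdsWithin (0:ℝ) (Set.Ioi 0), 0 ≤ fB γ lam ε := by
  filter_upwards [tendsto_LL.eventually_ge_atTop 0] with ε hM
  apply div_nonneg _ hM
  apply mul_nonneg (Nat.cast_nonneg _)
  rcases Nat.eq_zero_or_pos (jEps lam ε) with h | h
  · rw [h]; simp
  · exact Real.log_nonneg (by exact_mod_cast h)

/-- The main eventual estimate from an SPT bound. -/
lemma eventually_fB_le (hlam_anti : AntitoneOn lam (Set.Ici 1)) (hlam1 : lam 1 = 1)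
    (hlam2 : 0 < lam 2) (hγ_anti : AntitoneOn γ (Set.Ici 1))
    (hγ_pos : ∀ j, 1 ≤ j → 0 < γ j)
    (htl : Tendsto lam atTop (nhds 0)) (hγl : Tendsto γ atTop (nhds 0))
    {C p : ℝ} (hC : 1 ≤ C) (hp : 0 ≤ p)
    (hspt : ∀ d : ℕ, 1 ≤ d → ∀ ε : ℝ, 0 < ε → ε ≤ 1 →
      (infoN γ lam ε d : ℝ≥0∞) ≤ ENNReal.ofReal (C * (1 + Real.log ε⁻¹) ^ p)) :
    ∀ᶠ ε in nhdsWithin (0:ℝ) (Set.Ioi 0), fB γ lam ε ≤ gFun C p (Real.log ε⁻¹) := by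
  obtain ⟨K, hK0, hKb⟩ := log_lin_bound p hp
  have hlog2 : 0 < Real.log 2 := Real.log_pos one_lt_two
  have hlogC : 0 ≤ Real.log C := Real.log_nonneg hC
  have hlog3 : 0 ≤ Real.log 3 := Real.log_nonneg (by norm_num)
  set a : ℝ := 1 + (2 * (Real.log C + K) + 2 * p * Real.log 3) / Real.log 2 with hadef
  set b : ℝ := 2 * p / Real.log 2 with hbdef
  have ha1 : 1 ≤ a := by
    rw [hadef]
    have h0 : 0 ≤ (2 * (Real.log C + K) + 2 * p * Real.log 3) / Real.log 2 := by
      apply div_nonneg _ hlog2.le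
      positivity
    linarith
  have hb0 : 0 ≤ b := by positivity
  filter_upwards [self_mem_nhdsWithin, ev_sq_lt (hγ_pos 1 le_rfl), ev_sq_lt hlam2,
    ev_lt one_pos, tendsto_L.eventually_ge_atTop 1,
    tendsto_LL.eventually_ge_atTop (max 1 (a + b))]
    with ε hε0' hεγ hεlam hε1 hL1 hM1
  have hε0 : 0 < ε := hε0'
  set D := dEps γ ε with hDdef
  set J := jEps lam ε with hJdef
  set L := Real.log ε⁻¹ with hLdef
  set M := Real.log L with hMdef
  have hM1' : 1 ≤ M := le_trans (le_max_left _ _) hM1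
  have hMab : a + b ≤ M := le_trans (le_max_right _ _) hM1
  have hM0 : 0 < M := by linarith
  have hL0 : 0 < L := by linarith
  have hKI : (D:ℝ) * Real.log (J:ℝ) ≤
      Real.log C + p * Real.log (1 + 2 * (D:ℝ) * L) :=
    key_ineq hlam_anti hlam1 hγ_anti htl hγl hC hp hspt hε0 hε1 hεγ
  have hbJ : BddAbove {j : ℕ | 1 ≤ j ∧ ε ^ 2 < lam j} := bddAbove_setOf lam htl hε0
  have hbD : BddAbove {j : ℕ | 1 ≤ j ∧ ε ^ 2 < γ j} := bddAbove_setOf γ hγl hε0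
  have hJ2 : 2 ≤ J := le_csSup hbJ ⟨by norm_num, hεlam⟩
  have hD1 : 1 ≤ D := le_csSup hbD ⟨le_rfl, hεγ⟩
  have hD0 : (0:ℝ) ≤ (D:ℝ) := Nat.cast_nonneg D
  have hlogJ2 : Real.log 2 ≤ Real.log (J:ℝ) :=
    Real.log_le_log (by norm_num) (by exact_mod_cast hJ2)
  have hsplit : Real.log (1 + 2 * (D:ℝ) * L) ≤
      Real.log (1 + (D:ℝ)) + Real.log (1 + 2 * L) := by
    rw [← Real.log_mul (by positivity) (by positivity)]
    apply Real.log_le_log (by positivity)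
    nlinarith [hD0, hL0.le]
  have hKD : p * Real.log (1 + (D:ℝ)) ≤ Real.log 2 / 2 * (D:ℝ) + K := hKb (D:ℝ) hD0
  have hDle : (D:ℝ) * Real.log 2 ≤
      2 * (Real.log C + K) + 2 * p * Real.log (1 + 2 * L) := by
    have e1 : (D:ℝ) * Real.log 2 ≤ (D:ℝ) * Real.log (J:ℝ) :=
      mul_le_mul_of_nonneg_left hlogJ2 hD0
    have e2 := mul_le_mul_of_nonneg_left hsplit hp
    have e2' : p * (Real.log (1 + (D:ℝ)) + Real.log (1 + 2 * L)) =
        p * Real.log (1 + (D:ℝ)) + p * Real.log (1 + 2 * L) := mul_add p _ _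
    linarith
  have hlog3L : Real.log (1 + 2 * L) ≤ Real.log 3 + M := by
    rw [hMdef, ← Real.log_mul (by norm_num) (ne_of_gt hL0)]
    apply Real.log_le_log (by positivity)
    nlinarith
  have h1D : 1 + (D:ℝ) ≤ M ^ 2 := by
    have hDle2 : (D:ℝ) * Real.log 2 ≤
        2 * (Real.log C + K) + 2 * p * Real.log 3 + 2 * p * M := by
      have e5 := mul_le_mul_of_nonneg_left hlog3L (by positivity : (0:ℝ) ≤ 2 * p)
      have e5' : 2 * p * (Real.log 3 + M) = 2 * p * Real.log 3 + 2 * p * M := mul_add _ _ _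
      linarith
    have hD3 : (D:ℝ) ≤ (2 * (Real.log C + K) + 2 * p * Real.log 3 + 2 * p * M) /
        Real.log 2 := by
      rw [le_div_iff₀ hlog2]
      exact hDle2
    have hD4 : (2 * (Real.log C + K) + 2 * p * Real.log 3 + 2 * p * M) / Real.log 2 =
        (a - 1) + b * M := by
      rw [hadef, hbdef]
      field_simp
      ring
    rw [hD4] at hD3
    have f1 : a ≤ a * M := le_mul_of_one_le_right (by linarith) hM1'
    have f2 : (a + b) * M ≤ M * M := mul_le_mul_of_nonneg_right hMab hM0.le
    have f3 : M ^ 2 = M * M := sq M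
    have f4 : (a + b) * M = a * M + b * M := add_mul a b M
    linarith
  have hlog1D : Real.log (1 + (D:ℝ)) ≤ 2 * Real.log M := by
    calc Real.log (1 + (D:ℝ)) ≤ Real.log (M ^ 2) :=
          Real.log_le_log (by positivity) h1D
      _ = 2 * Real.log M := by rw [Real.log_pow]; norm_num
  have hnum : (D:ℝ) * Real.log (J:ℝ) ≤
      Real.log C + 2 * p * Real.log M + p * Real.log (1 + 2 * L) := by
    have e2 := mul_le_mul_of_nonneg_left hsplit hp
    have e2' : p * (Real.log (1 + (D:ℝ)) + Real.log (1 + 2 * L)) =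
        p * Real.log (1 + (D:ℝ)) + p * Real.log (1 + 2 * L) := mul_add p _ _
    have e3 := mul_le_mul_of_nonneg_left hlog1D hp
    have e3' : p * (2 * Real.log M) = 2 * p * Real.log M := by ring
    linarith
  show fB γ lam ε ≤ gFun C p L
  unfold fB gFun
  rw [← hDdef, ← hJdef, ← hLdef, ← hMdef]
  calc (D:ℝ) * Real.log (J:ℝ) / M
      ≤ (Real.log C + 2 * p * Real.log M + p * Real.log (1 + 2 * L)) / M := by
        exact (div_le_div_iff_of_pos_right hM0).mpr hnum
end StmtAux
namespace StmtAux
variable {γ lam : ℕ → ℝ}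

lemma limsup_fB_le_and_bdd (hlam_anti : AntitoneOn lam (Set.Ici 1)) (hlam1 : lam 1 = 1)
    (hlam2 : 0 < lam 2) (hγ_anti : AntitoneOn γ (Set.Ici 1))
    (hγ_pos : ∀ j, 1 ≤ j → 0 < γ j)
    (htl : Tendsto lam atTop (nhds 0)) (hγl : Tendsto γ atTop (nhds 0))
    {p : ℝ} (hp : 0 ≤ p) (hspt : ExpSPTwith γ lam p) :
    IsBoundedUnder (· ≤ ·) (nhdsWithin (0:ℝ) (Set.Ioi 0)) (fB γ lam) ∧
      Filter.limsup (fB γ lam) (nhdsWithin (0:ℝ) (Set.Ioi 0)) ≤ p := by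
  obtain ⟨C, hC0, hC⟩ := hspt
  have hC'1 : 1 ≤ max C 1 := le_max_right _ _
  have hspt' : ∀ d : ℕ, 1 ≤ d → ∀ ε : ℝ, 0 < ε → ε ≤ 1 →
      (infoN γ lam ε d : ℝ≥0∞) ≤ ENNReal.ofReal (max C 1 * (1 + Real.log ε⁻¹) ^ p) := by
    intro d hd ε hε0 hε1
    refine le_trans (hC d hd ε hε0 hε1) (ENNReal.ofReal_le_ofReal ?_)
    have hL0 : 0 ≤ Real.log ε⁻¹ := Real.log_nonneg (one_le_inv_iff₀.mpr ⟨hε0, hε1⟩)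
    have hrp : 0 ≤ (1 + Real.log ε⁻¹) ^ p := Real.rpow_nonneg (by linarith) p
    exact mul_le_mul_of_nonneg_right (le_max_left C 1) hrp
  have hEv := eventually_fB_le hlam_anti hlam1 hlam2 hγ_anti hγ_pos htl hγl hC'1 hp hspt'
  have hg : Tendsto (fun ε : ℝ => gFun (max C 1) p (Real.log ε⁻¹))
      (nhdsWithin (0:ℝ) (Set.Ioi 0)) (nhds p) := by
    have := (tendsto_gFun (max C 1) p).comp tendsto_L
    simpa [Function.comp_def] using this
  have hgb : IsBoundedUnder (· ≤ ·) (nhdsWithin (0:ℝ) (Set.Ioi 0))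
      (fun ε : ℝ => gFun (max C 1) p (Real.log ε⁻¹)) := hg.isBoundedUnder_le
  have hfb : IsBoundedUnder (· ≤ ·) (nhdsWithin (0:ℝ) (Set.Ioi 0)) (fB γ lam) :=
    hgb.mono_le hEv
  refine ⟨hfb, ?_⟩
  have hco : IsCoboundedUnder (· ≤ ·) (nhdsWithin (0:ℝ) (Set.Ioi 0)) (fB γ lam) := by
    apply Filter.IsBoundedUnder.isCoboundedUnder_le (α := ℝ)
    exact isBoundedUnder_of_eventually_ge fB_ev_nonneg
  calc Filter.limsup (fB γ lam) (nhdsWithin (0:ℝ) (Set.Ioi 0))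
      ≤ Filter.limsup (fun ε : ℝ => gFun (max C 1) p (Real.log ε⁻¹))
        (nhdsWithin (0:ℝ) (Set.Ioi 0)) := limsup_le_limsup hEv hco hgb
    _ = p := hg.limsup_eq

lemma limsup_fB_nonneg
    (hB : IsBoundedUnder (· ≤ ·) (nhdsWithin (0:ℝ) (Set.Ioi 0)) (fB γ lam)) :
    0 ≤ Filter.limsup (fB γ lam) (nhdsWithin (0:ℝ) (Set.Ioi 0)) :=
  le_limsup_of_frequently_le fB_ev_nonneg.frequently hB

lemma spt_of_lt (hlam_anti : AntitoneOn lam (Set.Ici 1)) (hlam1 : lam 1 = 1)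
    (hlam_nonneg : ∀ j, 1 ≤ j → 0 ≤ lam j)
    (hγ_pos : ∀ j, 1 ≤ j → 0 < γ j) (hγ_le : ∀ j, 1 ≤ j → γ j ≤ 1)
    (htl : Tendsto lam atTop (nhds 0)) (hγl : Tendsto γ atTop (nhds 0))
    (hB : IsBoundedUnder (· ≤ ·) (nhdsWithin (0:ℝ) (Set.Ioi 0)) (fB γ lam))
    {p : ℝ} (hp0 : 0 ≤ p)
    (hp : Filter.limsup (fB γ lam) (nhdsWithin (0:ℝ) (Set.Ioi 0)) < p) :
    ExpSPTwith γ lam p := by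
  have hev1 : ∀ᶠ ε in nhdsWithin (0:ℝ) (Set.Ioi 0), fB γ lam ε < p :=
    eventually_lt_of_limsup_lt hp hB
  have hev : ∀ᶠ ε in nhdsWithin (0:ℝ) (Set.Ioi 0),
      (fB γ lam ε < p ∧ 1 ≤ Real.log (Real.log ε⁻¹)) ∧ ε < 1 :=
    (hev1.and (tendsto_LL.eventually_ge_atTop 1)).and (ev_lt one_pos)
  obtain ⟨ε₀, hε₀mem, hsub⟩ := mem_nhdsGT_iff_exists_Ioc_subset.mp hev
  rw [Set.mem_Ioi] at hε₀mem
  set ε₁ := min ε₀ (1/2) with hε₁def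
  have hε₁0 : 0 < ε₁ := lt_min hε₀mem (by norm_num)
  have hε₁1 : ε₁ < 1 := lt_of_le_of_lt (min_le_right _ _) (by norm_num)
  have hε₁le : ε₁ ≤ ε₀ := min_le_left _ _
  set Cc : ℝ := max 1 ((jEps lam ε₁ ^ dEps γ ε₁ : ℕ) : ℝ) with hCcdef
  have hCc1 : 1 ≤ Cc := le_max_left _ _
  have hCcJD : ((jEps lam ε₁ ^ dEps γ ε₁ : ℕ) : ℝ) ≤ Cc := le_max_right _ _
  refine ⟨Cc, by linarith, ?_⟩
  intro d hd ε hε0 hε1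
  have hL0 : 0 ≤ Real.log ε⁻¹ := Real.log_nonneg (one_le_inv_iff₀.mpr ⟨hε0, hε1⟩)
  have hrpow1 : 1 ≤ (1 + Real.log ε⁻¹) ^ p := by
    have h := Real.rpow_le_rpow zero_le_one
      (show (1:ℝ) ≤ 1 + Real.log ε⁻¹ by linarith) hp0
    rwa [Real.one_rpow] at h
  have hrp0 : 0 ≤ (1 + Real.log ε⁻¹) ^ p := by linarith
  by_cases hle : ε ≤ ε₁
  · obtain ⟨⟨hflt, hM1⟩, hεlt1⟩ := hsub ⟨hε0, le_trans hle hε₁le⟩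
    have hM0 : (0:ℝ) < Real.log (Real.log ε⁻¹) := by linarith
    have hcount := infoN_le_pow hlam_anti hlam1 hlam_nonneg hγ_pos hγ_le htl hγl hε0 hεlt1 d
    have hflt' : (dEps γ ε : ℝ) * Real.log (jEps lam ε) / Real.log (Real.log ε⁻¹) < p := hflt
    have hDlogJ : (dEps γ ε : ℝ) * Real.log (jEps lam ε) ≤ p * Real.log (Real.log ε⁻¹) :=
      le_of_lt ((div_lt_iff₀ hM0).mp hflt')
    have hJ1 : 1 ≤ jEps lam ε :=
      le_csSup (bddAbove_setOf lam htl hε0) ⟨le_rfl, by rw [hlam1]; nlinarith⟩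
    have hJpos : (0:ℝ) < ((jEps lam ε ^ dEps γ ε : ℕ) : ℝ) := by
      have h1 : 1 ≤ jEps lam ε ^ dEps γ ε := Nat.one_le_pow _ _ hJ1
      exact_mod_cast Nat.lt_of_lt_of_le Nat.zero_lt_one h1
    have hLpos : (0:ℝ) < Real.log ε⁻¹ := by
      rcases lt_or_eq_of_le hL0 with h | h
      · exact h
      · rw [← h] at hM1; rw [Real.log_zero] at hM1; linarith
    have hJD : ((jEps lam ε ^ dEps γ ε : ℕ) : ℝ) ≤ (1 + Real.log ε⁻¹) ^ p := by
      calc ((jEps lam ε ^ dEps γ ε : ℕ) : ℝ)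
          = Real.exp ((dEps γ ε : ℝ) * Real.log (jEps lam ε)) := by
            rw [← Real.exp_log hJpos, Nat.cast_pow, Real.log_pow]
        _ ≤ Real.exp (p * Real.log (Real.log ε⁻¹)) := Real.exp_le_exp.mpr hDlogJ
        _ = (Real.log ε⁻¹) ^ p := by
            rw [Real.rpow_def_of_pos hLpos p]
            congr 1
            ring
        _ ≤ (1 + Real.log ε⁻¹) ^ p := Real.rpow_le_rpow (by linarith) (by linarith) hp0
    calc (infoN γ lam ε d : ℝ≥0∞)
        ≤ (((jEps lam ε ^ dEps γ ε : ℕ) : ℕ∞) : ℝ≥0∞) := ENat.toENNReal_le.mpr hcount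
      _ = ENNReal.ofReal (((jEps lam ε ^ dEps γ ε : ℕ) : ℝ)) := by
          rw [ENat.toENNReal_coe, ENNReal.ofReal_natCast]
      _ ≤ ENNReal.ofReal (Cc * (1 + Real.log ε⁻¹) ^ p) := by
          apply ENNReal.ofReal_le_ofReal
          nlinarith [mul_nonneg (by linarith : (0:ℝ) ≤ Cc - 1) hrp0]
  · push_neg at hle
    have hsubset : {n : Fin d → ℕ | (∀ i, 1 ≤ n i) ∧
          ε ^ 2 < ∏ i, lamKJ γ lam (i.1 + 1) (n i)} ⊆
        {n : Fin d → ℕ | (∀ i, 1 ≤ n i) ∧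
          ε₁ ^ 2 < ∏ i, lamKJ γ lam (i.1 + 1) (n i)} := by
      rintro n ⟨h1, h2⟩
      exact ⟨h1, lt_of_le_of_lt (by nlinarith : ε₁ ^ 2 ≤ ε ^ 2) h2⟩
    have hmono : infoN γ lam ε d ≤ infoN γ lam ε₁ d := by
      rw [infoN, infoN]
      exact Set.encard_le_encard hsubset
    have hcount := infoN_le_pow hlam_anti hlam1 hlam_nonneg hγ_pos hγ_le htl hγl hε₁0 hε₁1 d
    calc (infoN γ lam ε d : ℝ≥0∞)
        ≤ (((jEps lam ε₁ ^ dEps γ ε₁ : ℕ) : ℕ∞) : ℝ≥0∞) :=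
          ENat.toENNReal_le.mpr (le_trans hmono hcount)
      _ = ENNReal.ofReal (((jEps lam ε₁ ^ dEps γ ε₁ : ℕ) : ℝ)) := by
          rw [ENat.toENNReal_coe, ENNReal.ofReal_natCast]
      _ ≤ ENNReal.ofReal (Cc * (1 + Real.log ε⁻¹) ^ p) := by
          apply ENNReal.ofReal_le_ofReal
          nlinarith [mul_nonneg (by linarith : (0:ℝ) ≤ Cc) (by linarith : (0:ℝ) ≤ (1 + Real.log ε⁻¹) ^ p - 1)]
end StmtAux
/-- EXP-SPT holds iff λ_j → 0, γ_j → 0 and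
B = limsup_{ε→0⁺} d(ε)·log j(ε) / log log ε⁻¹ < ∞; in that case the exponent p* of
EXP-SPT equals B. -/
theorem stmt0 (γ lam : ℕ → ℝ)
    (hlam_anti : AntitoneOn lam (Set.Ici 1)) (hlam1 : lam 1 = 1) (hlam2 : 0 < lam 2)
    (hlam_nonneg : ∀ j, 1 ≤ j → 0 ≤ lam j)
    (hγ_anti : AntitoneOn γ (Set.Ici 1))
    (hγ_pos : ∀ j, 1 ≤ j → 0 < γ j) (hγ_le : ∀ j, 1 ≤ j → γ j ≤ 1) :
    (ExpSPT γ lam ↔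
      (Tendsto lam atTop (nhds 0) ∧ Tendsto γ atTop (nhds 0) ∧
        Filter.IsBoundedUnder (· ≤ ·) (nhdsWithin (0:ℝ) (Set.Ioi 0))
          (fun ε => (dEps γ ε : ℝ) * Real.log (jEps lam ε) / Real.log (Real.log ε⁻¹)))) ∧
    ((Tendsto lam atTop (nhds 0) ∧ Tendsto γ atTop (nhds 0) ∧
        Filter.IsBoundedUnder (· ≤ ·) (nhdsWithin (0:ℝ) (Set.Ioi 0))
          (fun ε => (dEps γ ε : ℝ) * Real.log (jEps lam ε) / Real.log (Real.log ε⁻¹))) →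
      sInf {p : ℝ | 0 ≤ p ∧ ExpSPTwith γ lam p} =
        Filter.limsup
          (fun ε => (dEps γ ε : ℝ) * Real.log (jEps lam ε) / Real.log (Real.log ε⁻¹))
          (nhdsWithin (0:ℝ) (Set.Ioi 0))) := by
  rw [StmtAux.fB_def γ lam]
  have hbdd_below : BddBelow {p : ℝ | 0 ≤ p ∧ ExpSPTwith γ lam p} :=
    ⟨0, fun p hp => hp.1⟩
  constructor
  · constructor
    · intro hspt
      have htl := StmtAux.spt_lam_tendsto hγ_pos hlam_anti hlam_nonneg hspt
      have hγl := StmtAux.spt_gam_tendsto hγ_pos hγ_anti hlam2 hspt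
      obtain ⟨p, hp0, hw⟩ := hspt
      exact ⟨htl, hγl,
        (StmtAux.limsup_fB_le_and_bdd hlam_anti hlam1 hlam2 hγ_anti hγ_pos htl hγl
          hp0 hw).1⟩
    · rintro ⟨htl, hγl, hB⟩
      have hB0 : 0 ≤ Filter.limsup (StmtAux.fB γ lam) (nhdsWithin (0:ℝ) (Set.Ioi 0)) :=
        StmtAux.limsup_fB_nonneg hB
      exact ⟨Filter.limsup (StmtAux.fB γ lam) (nhdsWithin (0:ℝ) (Set.Ioi 0)) + 1,
        by linarith,
        StmtAux.spt_of_lt hlam_anti hlam1 hlam_nonneg hγ_pos hγ_le htl hγl hB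
          (by linarith) (by linarith)⟩
  · rintro ⟨htl, hγl, hB⟩
    have hB0 : 0 ≤ Filter.limsup (StmtAux.fB γ lam) (nhdsWithin (0:ℝ) (Set.Ioi 0)) :=
      StmtAux.limsup_fB_nonneg hB
    apply le_antisymm
    · apply le_of_forall_pos_le_add
      intro η hη
      exact csInf_le hbdd_below
        ⟨by linarith,
          StmtAux.spt_of_lt hlam_anti hlam1 hlam_nonneg hγ_pos hγ_le htl hγl hB
            (by linarith) (by linarith)⟩
    · apply le_csInf
      · exact ⟨Filter.limsup (StmtAux.fB γ lam) (nhdsWithin (0:ℝ) (Set.Ioi 0)) + 1,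
          by linarith,
          StmtAux.spt_of_lt hlam_anti hlam1 hlam_nonneg hγ_pos hγ_le htl hγl hB
            (by linarith) (by linarith)⟩
      · rintro q ⟨hq0, hqw⟩
        exact (StmtAux.limsup_fB_le_and_bdd hlam_anti hlam1 hlam2 hγ_anti hγ_pos htl hγl
          hq0 hqw).2
end
end

section
/- The problem is EXP-SPT if and only if it is EXP-PT. -/
open Filter Real Set Topology
open scoped ENNReal NNReal

noncomputable section

section Aux

variable {γ lam : ℕ → ℝ}

lemma lam_le_one (hlam_anti : AntitoneOn lam (Set.Ici 1)) (hlam1 : lam 1 = 1)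
    {j : ℕ} (hj : 1 ≤ j) : lam j ≤ 1 := by
  rw [← hlam1]
  exact hlam_anti (Set.mem_Ici.mpr le_rfl) (Set.mem_Ici.mpr hj) hj

lemma lamKJ_le_one (hlam_anti : AntitoneOn lam (Set.Ici 1)) (hlam1 : lam 1 = 1)
    (hlam_nonneg : ∀ j, 1 ≤ j → 0 ≤ lam j)
    (hγ_pos : ∀ j, 1 ≤ j → 0 < γ j) (hγ_le : ∀ j, 1 ≤ j → γ j ≤ 1)
    {k j : ℕ} (hk : 1 ≤ k) (hj : 1 ≤ j) : lamKJ γ lam k j ≤ 1 := by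
  unfold lamKJ
  split
  · exact le_rfl
  · exact mul_le_one₀ (hγ_le k hk) (hlam_nonneg j hj) (lam_le_one hlam_anti hlam1 hj)

lemma lamKJ_nonneg (hlam_nonneg : ∀ j, 1 ≤ j → 0 ≤ lam j)
    (hγ_pos : ∀ j, 1 ≤ j → 0 < γ j)
    {k j : ℕ} (hk : 1 ≤ k) (hj : 1 ≤ j) : 0 ≤ lamKJ γ lam k j := by
  unfold lamKJ
  split
  · exact zero_le_one
  · exact mul_nonneg (hγ_pos k hk).le (hlam_nonneg j hj)

lemma factor_gt (hlam_anti : AntitoneOn lam (Set.Ici 1)) (hlam1 : lam 1 = 1)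
    (hlam_nonneg : ∀ j, 1 ≤ j → 0 ≤ lam j)
    (hγ_pos : ∀ j, 1 ≤ j → 0 < γ j) (hγ_le : ∀ j, 1 ≤ j → γ j ≤ 1)
    {d : ℕ} {ε : ℝ} {n : Fin d → ℕ} (hn1 : ∀ i, 1 ≤ n i)
    (hn2 : ε ^ 2 < ∏ i, lamKJ γ lam (i.1 + 1) (n i)) (i : Fin d) :
    ε ^ 2 < lamKJ γ lam (i.1 + 1) (n i) := by
  classical
  have hfle : ∀ j : Fin d, lamKJ γ lam (j.1 + 1) (n j) ≤ 1 := fun j =>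
    lamKJ_le_one hlam_anti hlam1 hlam_nonneg hγ_pos hγ_le (Nat.le_add_left 1 j.1) (hn1 j)
  have hfnn : ∀ j : Fin d, 0 ≤ lamKJ γ lam (j.1 + 1) (n j) := fun j =>
    lamKJ_nonneg hlam_nonneg hγ_pos (Nat.le_add_left 1 j.1) (hn1 j)
  have hrest : ∏ j ∈ Finset.univ.erase i, lamKJ γ lam (j.1 + 1) (n j) ≤ 1 :=
    Finset.prod_le_one (fun j _ => hfnn j) (fun j _ => hfle j)
  have hrestnn : 0 ≤ ∏ j ∈ Finset.univ.erase i, lamKJ γ lam (j.1 + 1) (n j) :=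
    Finset.prod_nonneg (fun j _ => hfnn j)
  have hsplit : ∏ j, lamKJ γ lam (j.1 + 1) (n j)
      = lamKJ γ lam (i.1 + 1) (n i) * ∏ j ∈ Finset.univ.erase i, lamKJ γ lam (j.1 + 1) (n j) :=
    (Finset.mul_prod_erase Finset.univ _ (Finset.mem_univ i)).symm
  calc ε ^ 2 < ∏ j, lamKJ γ lam (j.1 + 1) (n j) := hn2
    _ = lamKJ γ lam (i.1 + 1) (n i) * _ := hsplit
    _ ≤ lamKJ γ lam (i.1 + 1) (n i) := mul_le_of_le_one_right (hfnn i) hrest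

end Aux

section Count

variable {γ lam : ℕ → ℝ}

lemma count_lower (hγ_anti : AntitoneOn γ (Set.Ici 1)) (hγ_pos : ∀ j, 1 ≤ j → 0 < γ j)
    (hγ_le : ∀ j, 1 ≤ j → γ j ≤ 1) (hlam2_pos : 0 < lam 2) (hlam2_le : lam 2 ≤ 1)
    {d : ℕ} (hd : 1 ≤ d) {ε' : ℝ} (hε' : ε' ^ 2 < (γ d * lam 2) ^ d) :
    ((2 ^ d : ℕ) : ℕ∞) ≤ infoN γ lam ε' d := by
  classical
  have hγd : 0 < γ d := hγ_pos d hd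
  set f : (Fin d → Bool) → (Fin d → ℕ) := fun b i => if b i then 2 else 1 with hf
  have hinj : Function.Injective f := by
    intro b b' h
    funext i
    have := congrFun h i
    by_cases hb : b i <;> by_cases hb' : b' i <;> simp [hf, hb, hb'] at this ⊢
  have hsub : Set.range f ⊆
      {n : Fin d → ℕ | (∀ i, 1 ≤ n i) ∧ ε' ^ 2 < ∏ i, lamKJ γ lam (i.1 + 1) (n i)} := by
    rintro _ ⟨b, rfl⟩
    refine ⟨fun i => by by_cases hb : b i <;> simp [hf, hb], ?_⟩
    refine hε'.trans_le ?_
    have hfac : ∀ i : Fin d, γ d * lam 2 ≤ lamKJ γ lam (i.1 + 1) (f b i) := by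
      intro i
      by_cases hb : b i
      · have h1 : γ d ≤ γ (i.1 + 1) :=
          hγ_anti (Set.mem_Ici.mpr (Nat.le_add_left 1 i.1)) (Set.mem_Ici.mpr hd)
            (Nat.succ_le_of_lt i.2)
        simp only [hf, hb, if_true]
        unfold lamKJ
        norm_num
        exact mul_le_mul_of_nonneg_right h1 hlam2_pos.le
      · simp only [hf, hb, if_false]
        unfold lamKJ
        norm_num
        exact mul_le_one₀ (hγ_le d hd) hlam2_pos.le hlam2_le
    calc (γ d * lam 2) ^ d = ∏ _i : Fin d, (γ d * lam 2) := by
          rw [Finset.prod_const, Finset.card_univ, Fintype.card_fin]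
      _ ≤ ∏ i, lamKJ γ lam (i.1 + 1) (f b i) :=
          Finset.prod_le_prod (fun i _ => mul_nonneg hγd.le hlam2_pos.le) (fun i _ => hfac i)
  calc ((2 ^ d : ℕ) : ℕ∞) = (Set.univ : Set (Fin d → Bool)).encard := by
        rw [Set.encard_univ]
        simp [ENat.card_eq_coe_fintype_card]
    _ = (Set.range f).encard := by
        rw [← Set.image_univ, Set.InjOn.encard_image hinj.injOn]
    _ ≤ _ := Set.encard_le_encard hsub

lemma info_proj (hlam_anti : AntitoneOn lam (Set.Ici 1)) (hlam1 : lam 1 = 1)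
    (hlam_nonneg : ∀ j, 1 ≤ j → 0 ≤ lam j)
    (hγ_pos : ∀ j, 1 ≤ j → 0 < γ j) (hγ_le : ∀ j, 1 ≤ j → γ j ≤ 1)
    (ε : ℝ) {d D : ℕ} (hDd : D ≤ d)
    (hbig : ∀ i : ℕ, D ≤ i → i < d → γ (i + 1) ≤ ε ^ 2) :
    infoN γ lam ε d ≤ infoN γ lam ε D := by
  classical
  set A := {n : Fin d → ℕ | (∀ i, 1 ≤ n i) ∧ ε ^ 2 < ∏ i, lamKJ γ lam (i.1 + 1) (n i)} with hA
  set pr : (Fin d → ℕ) → (Fin D → ℕ) := fun n i => n ⟨i.1, lt_of_lt_of_le i.2 hDd⟩ with hpr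
  -- tails are 1
  have htail : ∀ n ∈ A, ∀ i : Fin d, D ≤ i.1 → n i = 1 := by
    intro n hn i hi
    by_contra hne
    have h1 : 1 ≤ n i := hn.1 i
    have h2 : 2 ≤ n i := by omega
    have hfac := factor_gt hlam_anti hlam1 hlam_nonneg hγ_pos hγ_le hn.1 hn.2 i
    have : lamKJ γ lam (i.1 + 1) (n i) = γ (i.1 + 1) * lam (n i) := by
      unfold lamKJ
      rw [if_neg (by omega)]
    rw [this] at hfac
    have hle : γ (i.1 + 1) * lam (n i) ≤ γ (i.1 + 1) :=
      mul_le_of_le_one_right (hγ_pos _ (Nat.le_add_left 1 i.1)).le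
        (lam_le_one hlam_anti hlam1 h1)
    have := hbig i.1 hi i.2
    linarith
  -- products agree under projection
  have hprodeq : ∀ n ∈ A,
      (∏ i, lamKJ γ lam (i.1 + 1) (pr n i)) = ∏ i, lamKJ γ lam (i.1 + 1) (n i) := by
    intro n hn
    set g : ℕ → ℝ := fun j => if h : j < d then lamKJ γ lam (j + 1) (n ⟨j, h⟩) else 1 with hg
    have h1 : (∏ i, lamKJ γ lam (i.1 + 1) (n i)) = ∏ j ∈ Finset.range d, g j := by
      rw [← Fin.prod_univ_eq_prod_range]
      refine Finset.prod_congr rfl fun i _ => ?_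
      simp [hg, i.2]
    have h2 : (∏ i, lamKJ γ lam (i.1 + 1) (pr n i)) = ∏ j ∈ Finset.range D, g j := by
      rw [← Fin.prod_univ_eq_prod_range]
      refine Finset.prod_congr rfl fun i _ => ?_
      have hid : i.1 < d := lt_of_lt_of_le i.2 hDd
      simp [hg, hpr, hid]
    have h3 : (∏ j ∈ Finset.Ico D d, g j) = 1 := by
      refine Finset.prod_eq_one fun j hj => ?_
      rw [Finset.mem_Ico] at hj
      have hn1 : n ⟨j, hj.2⟩ = 1 := htail n hn ⟨j, hj.2⟩ hj.1
      simp [hg, hj.2, hn1, lamKJ]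
    rw [h1, h2, ← Finset.prod_range_mul_prod_Ico g hDd, h3, mul_one]
  have hIm : pr '' A ⊆
      {m : Fin D → ℕ | (∀ i, 1 ≤ m i) ∧ ε ^ 2 < ∏ i, lamKJ γ lam (i.1 + 1) (m i)} := by
    rintro _ ⟨n, hn, rfl⟩
    exact ⟨fun i => hn.1 _, by rw [hprodeq n hn]; exact hn.2⟩
  have hinj : Set.InjOn pr A := by
    intro n hn n' hn' h
    funext i
    rcases lt_or_ge i.1 D with hi | hi
    · have := congrFun h ⟨i.1, hi⟩
      simpa [hpr] using this
    · rw [htail n hn i hi, htail n' hn' i hi]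
  calc infoN γ lam ε d = A.encard := rfl
    _ = (pr '' A).encard := (hinj.encard_image).symm
    _ ≤ _ := Set.encard_le_encard hIm

end Count

section Main

variable {γ lam : ℕ → ℝ}

/-- Growth lemma: from an EXP-PT-style bound, an exponential lower bound on dimensions
where `γ d > ε²`. -/
lemma growth (hγ_anti : AntitoneOn γ (Set.Ici 1)) (hγ_pos : ∀ j, 1 ≤ j → 0 < γ j)
    (hγ_le : ∀ j, 1 ≤ j → γ j ≤ 1) (hlam2 : 0 < lam 2) (hlam2_le : lam 2 ≤ 1)
    {C₁ q p : ℝ} (hC₁ : 1 ≤ C₁) (hq : 0 ≤ q) (hp : 0 ≤ p)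
    (hPT1 : ∀ d : ℕ, 1 ≤ d → ∀ ε : ℝ, 0 < ε → ε ≤ 1 →
      (infoN γ lam ε d : ℝ≥0∞) ≤ ENNReal.ofReal (C₁ * (d:ℝ) ^ q * (1 + Real.log ε⁻¹) ^ p))
    {d : ℕ} (hd : 1 ≤ d) {ε : ℝ} (hε0 : 0 < ε) (hε1 : ε ≤ 1) (hεγ : ε ^ 2 < γ d) :
    (2:ℝ) ^ d ≤ (C₁ * (2 + Real.log (lam 2)⁻¹) ^ p) * (d:ℝ) ^ (q + p)
      * (1 + Real.log ε⁻¹) ^ p := by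
  have hγd : 0 < γ d := hγ_pos d hd
  have hd0 : (0:ℝ) < (d:ℝ) := by exact_mod_cast hd
  have hd1 : (1:ℝ) ≤ (d:ℝ) := by exact_mod_cast hd
  set c : ℝ := Real.log (lam 2)⁻¹ with hcdef
  have hc0 : 0 ≤ c := Real.log_nonneg ((one_le_inv₀ hlam2).mpr hlam2_le)
  set L : ℝ := Real.log ε⁻¹ with hLdef
  have hL0 : 0 ≤ L := Real.log_nonneg ((one_le_inv₀ hε0).mpr hε1)
  have hx0 : 0 < γ d * lam 2 := mul_pos hγd hlam2
  have hx1 : γ d * lam 2 ≤ 1 := mul_le_one₀ (hγ_le d hd) hlam2.le hlam2_le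
  have hxd0 : 0 < (γ d * lam 2) ^ d := pow_pos hx0 d
  have hxd1 : (γ d * lam 2) ^ d ≤ 1 := pow_le_one₀ hx0.le hx1
  set ε' : ℝ := Real.sqrt ((γ d * lam 2) ^ d / 2) with hε'def
  have hε'0 : 0 < ε' := Real.sqrt_pos.mpr (by linarith)
  have hε'sq : ε' ^ 2 = (γ d * lam 2) ^ d / 2 := Real.sq_sqrt (by linarith)
  have hε'1 : ε' ≤ 1 := by
    rw [show (1:ℝ) = Real.sqrt 1 by simp]
    exact Real.sqrt_le_sqrt (by linarith)
  have hlow := count_lower hγ_anti hγ_pos hγ_le hlam2 hlam2_le hd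
    (ε' := ε') (by rw [hε'sq]; linarith)
  have hup := hPT1 d hd ε' hε'0 hε'1
  have hbε' : 0 ≤ 1 + Real.log ε'⁻¹ := by
    have := Real.log_nonneg ((one_le_inv₀ hε'0).mpr hε'1)
    linarith
  have hRnn : 0 ≤ C₁ * (d:ℝ) ^ q * (1 + Real.log ε'⁻¹) ^ p :=
    mul_nonneg (mul_nonneg (by linarith) (Real.rpow_nonneg hd0.le q))
      (Real.rpow_nonneg hbε' p)
  have hcast : ((2 ^ d : ℕ) : ℝ≥0∞) ≤ (infoN γ lam ε' d : ℝ≥0∞) := by exact_mod_cast hlow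
  have h2' := hcast.trans hup
  rw [← ENNReal.ofReal_natCast (2 ^ d)] at h2'
  have key : (2:ℝ) ^ d ≤ C₁ * (d:ℝ) ^ q * (1 + Real.log ε'⁻¹) ^ p := by
    have := (ENNReal.ofReal_le_ofReal_iff hRnn).mp h2'
    push_cast at this
    exact this
  -- bound `1 + log ε'⁻¹` by `d * M * (1 + L)` where `M = 2 + c`
  have hlogε' : Real.log ε'⁻¹ = (Real.log 2 - (d:ℝ) * Real.log (γ d * lam 2)) / 2 := by
    rw [Real.log_inv, hε'def, Real.log_sqrt (by linarith),
      Real.log_div (ne_of_gt hxd0) two_ne_zero, Real.log_pow]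
    ring
  have hsplit : Real.log (γ d * lam 2) = Real.log (γ d) - c := by
    rw [Real.log_mul (ne_of_gt hγd) (ne_of_gt hlam2), hcdef, Real.log_inv]
    ring
  have hlogγ : -Real.log (γ d) ≤ 2 * L := by
    have h1 : Real.log (ε ^ 2) ≤ Real.log (γ d) := Real.log_le_log (by positivity) hεγ.le
    rw [Real.log_pow] at h1
    have h2 : Real.log ε⁻¹ = -Real.log ε := Real.log_inv ε
    rw [hLdef, h2]
    push_cast at h1
    linarith
  have hlog2 : Real.log 2 ≤ 1 := by
    have := Real.log_le_sub_one_of_pos (show (0:ℝ) < 2 by norm_num)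
    linarith
  have h1L : 1 + Real.log ε'⁻¹ ≤ (d:ℝ) * (2 + c) * (1 + L) := by
    rw [hlogε', hsplit]
    have hdγ : (d:ℝ) * (-Real.log (γ d)) ≤ (d:ℝ) * (2 * L) :=
      mul_le_mul_of_nonneg_left hlogγ hd0.le
    have hdL : 0 ≤ (d:ℝ) * L := mul_nonneg hd0.le hL0
    have hdc : 0 ≤ (d:ℝ) * c := mul_nonneg hd0.le hc0
    have hdcL : 0 ≤ (d:ℝ) * c * L := mul_nonneg hdc hL0
    nlinarith
  have hrp : (1 + Real.log ε'⁻¹) ^ p ≤ ((d:ℝ) * (2 + c) * (1 + L)) ^ p :=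
    Real.rpow_le_rpow hbε' h1L hp
  have hmulrp : ((d:ℝ) * (2 + c) * (1 + L)) ^ p
      = (d:ℝ) ^ p * (2 + c) ^ p * (1 + L) ^ p := by
    rw [Real.mul_rpow (by positivity) (by linarith), Real.mul_rpow hd0.le (by linarith)]
  have hdq : 0 ≤ (d:ℝ) ^ q := Real.rpow_nonneg hd0.le q
  have hfinal : C₁ * (d:ℝ) ^ q * (1 + Real.log ε'⁻¹) ^ p
      ≤ C₁ * (2 + c) ^ p * (d:ℝ) ^ (q + p) * (1 + L) ^ p := by
    calc C₁ * (d:ℝ) ^ q * (1 + Real.log ε'⁻¹) ^ p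
        ≤ C₁ * (d:ℝ) ^ q * ((d:ℝ) ^ p * (2 + c) ^ p * (1 + L) ^ p) := by
          refine mul_le_mul_of_nonneg_left ?_ (by positivity)
          rw [← hmulrp]; exact hrp
      _ = C₁ * (2 + c) ^ p * ((d:ℝ) ^ q * (d:ℝ) ^ p) * (1 + L) ^ p := by ring
      _ = C₁ * (2 + c) ^ p * (d:ℝ) ^ (q + p) * (1 + L) ^ p := by
          rw [← Real.rpow_add hd0]
  exact key.trans hfinal

end Main

set_option maxHeartbeats 1000000 in
/-- EXP-SPT holds iff EXP-PT holds. -/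
theorem stmt1 (γ lam : ℕ → ℝ)
    (hlam_anti : AntitoneOn lam (Set.Ici 1)) (hlam1 : lam 1 = 1) (hlam2 : 0 < lam 2)
    (hlam_nonneg : ∀ j, 1 ≤ j → 0 ≤ lam j)
    (hγ_anti : AntitoneOn γ (Set.Ici 1))
    (hγ_pos : ∀ j, 1 ≤ j → 0 < γ j) (hγ_le : ∀ j, 1 ≤ j → γ j ≤ 1) :
    ExpSPT γ lam ↔ ExpPT γ lam := by
  constructor
  · rintro ⟨p, hp, C, hC, hbound⟩
    refine ⟨C, 0, p, hC, le_rfl, hp, fun d hd ε hε0 hε1 => ?_⟩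
    have := hbound d hd ε hε0 hε1
    rwa [Real.rpow_zero, mul_one]
  · rintro ⟨C, q, p, hC, hq, hp, hPT⟩
    have hlam2_le : lam 2 ≤ 1 := lam_le_one hlam_anti hlam1 (by norm_num)
    set C₁ : ℝ := C + 1 with hC₁def
    have hC₁ : (1:ℝ) ≤ C₁ := by rw [hC₁def]; linarith
    have hPT1 : ∀ d : ℕ, 1 ≤ d → ∀ ε : ℝ, 0 < ε → ε ≤ 1 →
        (infoN γ lam ε d : ℝ≥0∞) ≤
          ENNReal.ofReal (C₁ * (d:ℝ) ^ q * (1 + Real.log ε⁻¹) ^ p) := by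
      intro d hd ε hε0 hε1
      refine (hPT d hd ε hε0 hε1).trans (ENNReal.ofReal_le_ofReal ?_)
      have hd0 : (0:ℝ) < (d:ℝ) := by exact_mod_cast hd
      have hb : (0:ℝ) ≤ 1 + Real.log ε⁻¹ := by
        have := Real.log_nonneg ((one_le_inv₀ hε0).mpr hε1)
        linarith
      have h1 : (0:ℝ) ≤ (d:ℝ) ^ q := Real.rpow_nonneg hd0.le q
      have h2 : (0:ℝ) ≤ (1 + Real.log ε⁻¹) ^ p := Real.rpow_nonneg hb p
      nlinarith [mul_nonneg h1 h2]
    set c : ℝ := Real.log (lam 2)⁻¹ with hcdef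
    have hc0 : 0 ≤ c := Real.log_nonneg ((one_le_inv₀ hlam2).mpr hlam2_le)
    set C' : ℝ := C₁ * (2 + c) ^ p with hC'def
    have hMp : (1:ℝ) ≤ (2 + c) ^ p := by
      rw [show (1:ℝ) = (1:ℝ) ^ p by rw [Real.one_rpow]]
      exact Real.rpow_le_rpow zero_le_one (by linarith) hp
    have hC'1 : (1:ℝ) ≤ C' := by
      rw [hC'def]
      nlinarith
    -- eventual domination of `d^(q+p)` by `√2^d`
    have hone_lt : (1:ℝ) < Real.sqrt 2 := by
      rw [show (1:ℝ) = Real.sqrt 1 by simp]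
      exact Real.sqrt_lt_sqrt (by norm_num) one_lt_two
    obtain ⟨D0, hD0⟩ := Filter.eventually_atTop.mp
      ((tendsto_pow_const_div_const_pow_of_one_lt (⌈q + p⌉₊) hone_lt).eventually_lt_const
        (show (0:ℝ) < 1 by norm_num))
    have hpowle : ∀ d : ℕ, D0 ≤ d → 1 ≤ d → (d:ℝ) ^ (q + p) ≤ Real.sqrt 2 ^ d := by
      intro d h1 h2
      have hd1 : (1:ℝ) ≤ (d:ℝ) := by exact_mod_cast h2
      have ha : (d:ℝ) ^ (q + p) ≤ (d:ℝ) ^ ((⌈q + p⌉₊ : ℕ) : ℝ) :=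
        Real.rpow_le_rpow_of_exponent_le hd1 (Nat.le_ceil _)
      rw [Real.rpow_natCast] at ha
      have h3 := hD0 d h1
      have hs : (0:ℝ) < Real.sqrt 2 ^ d := by positivity
      have h4 := (div_lt_one hs).mp h3
      linarith
    set B : ℝ := ((D0:ℝ) + 1) + (Real.log C' + p) / Real.log (Real.sqrt 2) with hBdef
    have hlogs : 0 < Real.log (Real.sqrt 2) := Real.log_pos hone_lt
    have hlogC' : 0 ≤ Real.log C' := Real.log_nonneg hC'1
    have hB0 : 0 ≤ B := by
      rw [hBdef]
      have := div_nonneg (by linarith : (0:ℝ) ≤ Real.log C' + p) hlogs.le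
      positivity
    -- key dimension bound
    have hK : ∀ ε : ℝ, 0 < ε → ε ≤ 1 → ∀ d : ℕ, 1 ≤ d → ε ^ 2 < γ d →
        (d:ℝ) ≤ B * (1 + Real.log ε⁻¹) := by
      intro ε hε0 hε1 d hd hεγ
      have hL1 : (1:ℝ) ≤ 1 + Real.log ε⁻¹ := by
        have := Real.log_nonneg ((one_le_inv₀ hε0).mpr hε1)
        linarith
      set L1 : ℝ := 1 + Real.log ε⁻¹ with hL1def
      rcases le_or_gt d D0 with hcase | hcase
      · have hd' : (d:ℝ) ≤ (D0:ℝ) := by exact_mod_cast hcase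
        have hdiv : 0 ≤ (Real.log C' + p) / Real.log (Real.sqrt 2) :=
          div_nonneg (by linarith) hlogs.le
        have hpos : (0:ℝ) ≤ (D0:ℝ) + 1 + (Real.log C' + p) / Real.log (Real.sqrt 2) := by
          positivity
        rw [hBdef]
        nlinarith [mul_nonneg (show (0:ℝ) ≤ L1 - 1 by linarith) hpos]
      · have hg := growth hγ_anti hγ_pos hγ_le hlam2 hlam2_le hC₁ hq hp hPT1 hd hε0 hε1 hεγ
        rw [← hcdef, ← hC'def, ← hL1def] at hg
        have hple := hpowle d hcase.le hd
        have hL1p : (1:ℝ) ≤ L1 ^ p := by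
          rw [show (1:ℝ) = (1:ℝ) ^ p by rw [Real.one_rpow]]
          exact Real.rpow_le_rpow zero_le_one hL1 hp
        have hs0 : (0:ℝ) < Real.sqrt 2 ^ d := by positivity
        have h2d : (2:ℝ) ^ d = Real.sqrt 2 ^ d * Real.sqrt 2 ^ d := by
          rw [← mul_pow, Real.mul_self_sqrt (by norm_num)]
        have h4 : Real.sqrt 2 ^ d * Real.sqrt 2 ^ d ≤ (C' * L1 ^ p) * Real.sqrt 2 ^ d := by
          calc Real.sqrt 2 ^ d * Real.sqrt 2 ^ d = (2:ℝ) ^ d := h2d.symm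
            _ ≤ C' * (d:ℝ) ^ (q + p) * L1 ^ p := hg
            _ ≤ (C' * L1 ^ p) * Real.sqrt 2 ^ d := by
                have hnn : (0:ℝ) ≤ C' * L1 ^ p := mul_nonneg (by linarith) (by linarith)
                nlinarith [mul_le_mul_of_nonneg_left hple hnn]
        have h5 : Real.sqrt 2 ^ d ≤ C' * L1 ^ p := le_of_mul_le_mul_right (by linarith) hs0
        have h6 : (d:ℝ) * Real.log (Real.sqrt 2) ≤ Real.log C' + p * Real.log L1 := by
          have h7 := Real.log_le_log hs0 h5
          rwa [Real.log_pow, Real.log_mul (by linarith) (by positivity),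
            Real.log_rpow (by linarith)] at h7
        have h8 : Real.log L1 ≤ L1 := by
          have := Real.log_le_sub_one_of_pos (show (0:ℝ) < L1 by linarith)
          linarith
        have h9 : (d:ℝ) * Real.log (Real.sqrt 2) ≤ (Real.log C' + p) * L1 := by
          nlinarith [mul_le_mul_of_nonneg_left h8 hp, mul_nonneg hlogC' (show (0:ℝ) ≤ L1 - 1 by linarith)]
        have h10 : (d:ℝ) ≤ ((Real.log C' + p) / Real.log (Real.sqrt 2)) * L1 := by
          rw [div_mul_eq_mul_div, le_div_iff₀ hlogs]
          linarith
        have hXB : (Real.log C' + p) / Real.log (Real.sqrt 2) ≤ B := by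
          rw [hBdef]
          have : (0:ℝ) ≤ (D0:ℝ) + 1 := by positivity
          linarith
        exact h10.trans (mul_le_mul_of_nonneg_right hXB (by linarith))
    -- final assembly
    refine ⟨p + q, by linarith, C₁ * (B + 1) ^ q, ?_, ?_⟩
    · have : (0:ℝ) ≤ (B + 1) ^ q := Real.rpow_nonneg (by linarith) q
      nlinarith
    intro d hd ε hε0 hε1
    have hL1 : (1:ℝ) ≤ 1 + Real.log ε⁻¹ := by
      have := Real.log_nonneg ((one_le_inv₀ hε0).mpr hε1)
      linarith
    set L1 : ℝ := 1 + Real.log ε⁻¹ with hL1def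
    set K : ℕ := max 1 ⌈B * L1⌉₊ with hKdef
    set D : ℕ := min d K with hDdef
    have hD1 : 1 ≤ D := le_min hd (le_max_left _ _)
    have hDd : D ≤ d := min_le_left _ _
    have hbig : ∀ i : ℕ, D ≤ i → i < d → γ (i + 1) ≤ ε ^ 2 := by
      intro i hDi hid
      by_contra hcon
      push_neg at hcon
      have h1 := hK ε hε0 hε1 (i + 1) (Nat.le_add_left 1 i) hcon
      rw [← hL1def] at h1
      have hceil : i + 1 ≤ ⌈B * L1⌉₊ := by
        have h2 := h1.trans (Nat.le_ceil (B * L1))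
        exact_mod_cast h2
      have : i < D := lt_min hid (lt_of_lt_of_le (Nat.lt_succ_self i)
        (hceil.trans (le_max_right 1 _)))
      omega
    have hmono := info_proj hlam_anti hlam1 hlam_nonneg hγ_pos hγ_le ε hDd hbig
    have hup := hPT1 D hD1 ε hε0 hε1
    rw [← hL1def] at hup
    have hDle : (D:ℝ) ≤ (B + 1) * L1 := by
      have h1 : (D:ℝ) ≤ (K:ℝ) := by exact_mod_cast min_le_right d K
      have h2 : (K:ℝ) ≤ B * L1 + 1 := by
        rw [hKdef]
        push_cast
        refine max_le (by nlinarith) ?_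
        have := Nat.ceil_lt_add_one (show (0:ℝ) ≤ B * L1 by positivity)
        linarith
      nlinarith
    have hD0' : (0:ℝ) < (D:ℝ) := by exact_mod_cast hD1
    calc (infoN γ lam ε d : ℝ≥0∞) ≤ (infoN γ lam ε D : ℝ≥0∞) := by exact_mod_cast hmono
      _ ≤ ENNReal.ofReal (C₁ * (D:ℝ) ^ q * L1 ^ p) := hup
      _ ≤ ENNReal.ofReal (C₁ * (B + 1) ^ q * L1 ^ (p + q)) := by
          refine ENNReal.ofReal_le_ofReal ?_
          have hDq : (D:ℝ) ^ q ≤ ((B + 1) * L1) ^ q :=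
            Real.rpow_le_rpow hD0'.le hDle hq
          rw [Real.mul_rpow (by linarith) (by linarith)] at hDq
          have h0p : (0:ℝ) ≤ L1 ^ p := Real.rpow_nonneg (by linarith) p
          have hfin : C₁ * (D:ℝ) ^ q * L1 ^ p ≤ C₁ * ((B + 1) ^ q * L1 ^ q) * L1 ^ p :=
            mul_le_mul_of_nonneg_right
              (mul_le_mul_of_nonneg_left hDq (by linarith)) h0p
          calc C₁ * (D:ℝ) ^ q * L1 ^ p ≤ C₁ * ((B + 1) ^ q * L1 ^ q) * L1 ^ p := hfin
            _ = C₁ * (B + 1) ^ q * (L1 ^ p * L1 ^ q) := by ring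
            _ = C₁ * (B + 1) ^ q * L1 ^ (p + q) := by rw [← Real.rpow_add (by linarith)]
end
end

section
/- EXP-WT holds if and only if lim_{j→∞} γ_j = 0 and lim_{j→∞} (log λ_j⁻¹)/log j = ∞, the latter meaning that for every M > 0 one has λ_j < j^{−M} for all sufficiently large j. -/
open Filter Real Set Topology
open scoped ENNReal NNReal

noncomputable section

lemma encard_lower {d : ℕ} (S : Set (Fin d → ℕ)) (α : Type) [Fintype α]
    (f : α → (Fin d → ℕ)) (hf : Function.Injective f) (hfS : ∀ a, f a ∈ S) :
    (Fintype.card α : ℕ∞) ≤ S.encard := by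
  have h1 : (Set.range f).encard = (Fintype.card α : ℕ∞) := by
    rw [← Set.image_univ, hf.injOn.encard_image, Set.encard_univ]
    simp
  rw [← h1]
  exact Set.encard_le_encard (Set.range_subset_iff.mpr hfS)

lemma arith1 (dR L2 LA : ℝ) (hd1' : 1 ≤ dR) (hl2 : 0 ≤ L2) (hloga : 0 ≤ LA) :
    dR + (1 + (L2 + dR/2 * LA)) ≤ dR * (2 + L2 + 1/2 * LA) := by
  nlinarith [le_mul_of_one_le_left hl2 hd1']

lemma prod_le_single' {d : ℕ} {f : Fin d → ℝ} (h0 : ∀ i, 0 ≤ f i) (h1 : ∀ i, f i ≤ 1)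
    (i : Fin d) : ∏ j, f j ≤ f i := by
  rw [← Finset.mul_prod_erase Finset.univ _ (Finset.mem_univ i)]
  exact mul_le_of_le_one_right (h0 i)
    (Finset.prod_le_one (fun j _ => h0 j) (fun j _ => h1 j))

lemma sum_sq_inv_le (B : ℕ) : ∑ j ∈ Finset.Icc 2 B, ((j:ℝ)^2)⁻¹ ≤ 1 := by
  have key : ∀ B : ℕ, 1 ≤ B → ∑ j ∈ Finset.Icc 2 B, ((j:ℝ)^2)⁻¹ ≤ 1 - (B:ℝ)⁻¹ := by
    intro B hB
    induction B, hB using Nat.le_induction with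
    | base => simp
    | succ B hB ih =>
      have hins : Finset.Icc 2 (B+1) = insert (B+1) (Finset.Icc 2 B) := by
        ext j; simp [Finset.mem_Icc, Finset.mem_insert]; omega
      rw [hins, Finset.sum_insert (by simp [Finset.mem_Icc])]
      have hb : (1:ℝ) ≤ (B:ℝ) := by exact_mod_cast hB
      have h0 : (0:ℝ) < B := by linarith
      have h1 : (0:ℝ) < (B:ℝ)+1 := by linarith
      have e : (B:ℝ)⁻¹ - ((B:ℝ)+1)⁻¹ = ((B:ℝ)*((B:ℝ)+1))⁻¹ := by
        field_simp
        ring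
      have h2 : ((((B:ℝ))+1)^2)⁻¹ ≤ ((B:ℝ)*((B:ℝ)+1))⁻¹ := by
        apply inv_anti₀ (by positivity); nlinarith
      push_cast
      linarith
  rcases Nat.eq_zero_or_pos B with h|h
  · subst h; simp
  · have hB0 : (0:ℝ) < (B:ℝ) := by exact_mod_cast h
    have : (0:ℝ) ≤ (B:ℝ)⁻¹ := by positivity
    linarith [key B h]

lemma nec_gamma (γ lam : ℕ → ℝ)
    (hlam_anti : AntitoneOn lam (Set.Ici 1)) (hlam1 : lam 1 = 1) (hlam2 : 0 < lam 2)
    (hγ_anti : AntitoneOn γ (Set.Ici 1))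
    (hγ_pos : ∀ j, 1 ≤ j → 0 < γ j) (hγ_le : ∀ j, 1 ≤ j → γ j ≤ 1)
    (hwt : ExpSTWT γ lam 1 1) : Tendsto γ atTop (nhds 0) := by
  have hlam2le : lam 2 ≤ 1 := by
    have := hlam_anti (Set.mem_Ici.mpr le_rfl) (Set.mem_Ici.mpr (by norm_num : (1:ℕ) ≤ 2)) (by norm_num)
    rwa [hlam1] at this
  rw [Metric.tendsto_atTop]
  intro c hc
  have key : ∃ j, 1 ≤ j ∧ γ j < c := by
    by_contra hno
    push_neg at hno
    -- hno : ∀ j, 1 ≤ j → c ≤ γ j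
    set c' := min c 1 with hc'def
    have hc'0 : 0 < c' := lt_min hc one_pos
    set a := c' * lam 2 with hadef
    have ha0 : 0 < a := mul_pos hc'0 hlam2
    have ha1 : a ≤ 1 := mul_le_one₀ (min_le_right _ _) hlam2.le hlam2le
    have hloga : 0 ≤ Real.log a⁻¹ := Real.log_nonneg ((one_le_inv_iff₀).mpr ⟨ha0, ha1⟩)
    set Cd := 2 + Real.log 2 + (1/2) * Real.log a⁻¹ with hCddef
    have hCd : 0 < Cd := by
      have := Real.log_pos (by norm_num : (1:ℝ) < 2)
      positivity
    set δ₀ := Real.log 2 / Cd with hδ₀def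
    have hδ₀ : 0 < δ₀ := div_pos (Real.log_pos (by norm_num)) hCd
    obtain ⟨T, hT⟩ := hwt δ₀ hδ₀
    set d := max 1 ⌈T⌉₊ with hddef
    have hd1 : 1 ≤ d := le_max_left _ _
    set x := a ^ d with hxdef
    have hx0 : 0 < x := pow_pos ha0 d
    have hx1 : x ≤ 1 := pow_le_one₀ ha0.le ha1
    set ε := Real.sqrt x / 2 with hεdef
    have hε0 : 0 < ε := by positivity
    have hε1 : ε ≤ 1 := by
      have : Real.sqrt x ≤ 1 := by
        rw [show (1:ℝ) = Real.sqrt 1 by simp]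
        exact Real.sqrt_le_sqrt hx1
      rw [hεdef]; linarith
    have hεsq : ε ^ 2 = x / 4 := by
      rw [hεdef, div_pow, Real.sq_sqrt hx0.le]; norm_num
    have hdT : T ≤ (d : ℝ) + ε⁻¹ := by
      have h1 : T ≤ (⌈T⌉₊ : ℝ) := Nat.le_ceil T
      have h2 : (⌈T⌉₊ : ℝ) ≤ (d : ℝ) := by exact_mod_cast le_max_right 1 ⌈T⌉₊
      have h3 : 0 ≤ ε⁻¹ := by positivity
      linarith
    obtain ⟨N, hN, hratio⟩ := hT d hd1 ε hε0 hε1 hdT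
    -- lower bound: 2^d ≤ N
    have hlow : ((2^d : ℕ) : ℕ∞) ≤ infoN γ lam ε d := by
      have := encard_lower
        {n : Fin d → ℕ | (∀ i, 1 ≤ n i) ∧ ε ^ 2 < ∏ i, lamKJ γ lam (i.1 + 1) (n i)}
        (Fin d → Bool) (fun b i => if b i then 2 else 1) ?_ ?_
      · simpa [infoN] using this
      · intro b b' h
        funext i
        have := congrFun h i
        by_cases hb : b i <;> by_cases hb' : b' i <;> simp_all
      · intro b
        constructor
        · intro i; dsimp only; split <;> norm_num
        · have hprod : (a:ℝ) ^ d ≤ ∏ i, lamKJ γ lam (i.1 + 1) (if b i then 2 else 1) := by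
            have : ∏ _i : Fin d, a ≤ ∏ i, lamKJ γ lam (i.1 + 1) (if b i then 2 else 1) := by
              apply Finset.prod_le_prod (fun i _ => ha0.le)
              intro i _
              by_cases hb : b i
              · simp only [hb, if_true, lamKJ, if_neg (by norm_num : (2:ℕ) ≠ 1)]
                have h1 : c ≤ γ (i.1 + 1) := hno _ (Nat.le_add_left 1 i.1)
                have h2 : c' ≤ γ (i.1 + 1) := le_trans (min_le_left _ _) h1
                exact mul_le_mul_of_nonneg_right h2 hlam2.le
              · simp only [hb, if_false, lamKJ, if_pos rfl]
                exact ha1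
            simpa using this
          rw [hεsq]
          calc x / 4 < x := by linarith
            _ = a ^ d := hxdef
            _ ≤ _ := hprod
    rw [hN] at hlow
    have hNge : 2 ^ d ≤ N := by exact_mod_cast hlow
    -- numerator
    have hnum : (d : ℝ) * Real.log 2 ≤ Real.log (max 1 (N : ℝ)) := by
      have h2d : ((2:ℝ)) ^ d ≤ max 1 (N : ℝ) := by
        have : ((2^d : ℕ) : ℝ) ≤ (N : ℝ) := by exact_mod_cast hNge
        push_cast at this
        exact le_trans this (le_max_right _ _)
      have := Real.log_le_log (by positivity) h2d
      rwa [Real.log_pow] at this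
    -- denominator
    have hlogε : Real.log ε⁻¹ = Real.log 2 + (d : ℝ) / 2 * Real.log a⁻¹ := by
      rw [Real.log_inv, hεdef, Real.log_div (by positivity) (by norm_num),
        Real.log_sqrt hx0.le, hxdef, Real.log_pow, Real.log_inv]
      ring
    have hlogε0 : 0 ≤ Real.log ε⁻¹ := Real.log_nonneg ((one_le_inv_iff₀).mpr ⟨hε0, hε1⟩)
    have hden_pos : 0 < (d : ℝ) + (1 + Real.log ε⁻¹) := by
      have : (1:ℝ) ≤ (d:ℝ) := by exact_mod_cast hd1
      linarith
    have hden_le : (d : ℝ) + (1 + Real.log ε⁻¹) ≤ (d : ℝ) * Cd := by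
      rw [hlogε, hCddef]
      exact arith1 (d:ℝ) (Real.log 2) (Real.log a⁻¹) (by exact_mod_cast hd1)
        (Real.log_pos (by norm_num)).le hloga
    rw [Real.rpow_one, Real.rpow_one] at hratio
    have hfinal : δ₀ ≤ Real.log (max 1 (N:ℝ)) / ((d : ℝ) + (1 + Real.log ε⁻¹)) := by
      rw [le_div_iff₀ hden_pos]
      have hd0 : (0:ℝ) < (d:ℝ) := by exact_mod_cast hd1
      calc δ₀ * ((d : ℝ) + (1 + Real.log ε⁻¹)) ≤ δ₀ * ((d:ℝ) * Cd) :=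
            mul_le_mul_of_nonneg_left hden_le hδ₀.le
        _ = (d:ℝ) * Real.log 2 := by
              rw [hδ₀def]; field_simp
        _ ≤ _ := hnum
    linarith
  obtain ⟨j₀, hj₀, hlt⟩ := key
  refine ⟨j₀, fun n hn => ?_⟩
  rw [Real.dist_eq, sub_zero, abs_of_pos (hγ_pos n (hj₀.trans hn))]
  exact lt_of_le_of_lt (hγ_anti (Set.mem_Ici.mpr hj₀) (Set.mem_Ici.mpr (hj₀.trans hn)) hn) hlt

lemma nec_lam (γ lam : ℕ → ℝ)
    (hlam_anti : AntitoneOn lam (Set.Ici 1)) (hlam1 : lam 1 = 1)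
    (hlam_nonneg : ∀ j, 1 ≤ j → 0 ≤ lam j)
    (hγ_pos : ∀ j, 1 ≤ j → 0 < γ j) (hγ_le : ∀ j, 1 ≤ j → γ j ≤ 1)
    (hwt : ExpSTWT γ lam 1 1) (M : ℝ) (hM : 0 < M) :
    ∀ᶠ j : ℕ in atTop, lam j < (j : ℝ) ^ (-M) := by
  by_contra hev
  have hfreq : ∃ᶠ j : ℕ in atTop, (j : ℝ) ^ (-M) ≤ lam j := by
    rw [Filter.not_eventually] at hev
    exact hev.mono (fun j h => not_lt.mp h)
  have hγ1 : 0 < γ 1 := hγ_pos 1 le_rfl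
  have hγ1le : γ 1 ≤ 1 := hγ_le 1 le_rfl
  have hlogγ : 0 ≤ Real.log (γ 1)⁻¹ := Real.log_nonneg ((one_le_inv_iff₀).mpr ⟨hγ1, hγ1le⟩)
  set C₀ := 2 + (1/2) * Real.log 2 + (1/2) * Real.log (γ 1)⁻¹ with hC₀def
  have hC₀ : 0 < C₀ := by
    have := (Real.log_pos (by norm_num : (1:ℝ) < 2)).le
    positivity
  set δ₁ := 1 / M with hδ₁def
  have hδ₁ : 0 < δ₁ := by positivity
  obtain ⟨T, hT⟩ := hwt δ₁ hδ₁
  set j₁ := ⌈Real.exp (2 * C₀ / M)⌉₊ with hj₁def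
  set j₂ := ⌈(max 1 T) ^ ((2:ℝ)/M)⌉₊ with hj₂def
  obtain ⟨j, hjge, hjlam⟩ := (Filter.frequently_atTop.mp hfreq) (max 1 (max j₁ j₂))
  have hj1 : 1 ≤ j := le_trans (le_max_left _ _) hjge
  have hj0 : (0:ℝ) < (j:ℝ) := by exact_mod_cast hj1
  have hjM0 : (0:ℝ) < (j:ℝ) ^ (-M) := Real.rpow_pos_of_pos hj0 _
  have hjM1 : (j:ℝ) ^ (-M) ≤ 1 :=
    Real.rpow_le_one_of_one_le_of_nonpos (by exact_mod_cast hj1) (by linarith)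
  -- log j is large
  have hlogj : 2 * C₀ / M ≤ Real.log j := by
    have h1 : Real.exp (2 * C₀ / M) ≤ (j₁ : ℝ) := Nat.le_ceil _
    have h2 : (j₁ : ℝ) ≤ (j : ℝ) := by
      exact_mod_cast le_trans (le_trans (le_max_left _ _) (le_max_right 1 _)) hjge
    have := Real.log_le_log (Real.exp_pos _) (le_trans h1 h2)
    rwa [Real.log_exp] at this
  have hlogj0 : 0 < Real.log j := lt_of_lt_of_le (by positivity) hlogj
  -- ε
  set t := γ 1 * (j:ℝ) ^ (-M) / 2 with htdef
  have ht0 : 0 < t := by positivity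
  have ht1 : t ≤ 1/2 := by
    have : γ 1 * (j:ℝ) ^ (-M) ≤ 1 := mul_le_one₀ hγ1le hjM0.le hjM1
    rw [htdef]; linarith
  set ε := Real.sqrt t with hεdef
  have hε0 : 0 < ε := Real.sqrt_pos.mpr ht0
  have hε1 : ε ≤ 1 := by
    rw [hεdef, show (1:ℝ) = Real.sqrt 1 by simp]
    exact Real.sqrt_le_sqrt (by linarith)
  have hεsq : ε ^ 2 = t := Real.sq_sqrt ht0.le
  -- T ≤ 1 + ε⁻¹
  have hεinv : max 1 T ≤ ε⁻¹ := by
    have h1 : ε ≤ Real.sqrt ((j:ℝ) ^ (-M)) := by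
      apply Real.sqrt_le_sqrt
      nlinarith
    have h2 : (Real.sqrt ((j:ℝ) ^ (-M)))⁻¹ ≤ ε⁻¹ := by
      apply inv_anti₀ hε0 h1
    have h3 : (Real.sqrt ((j:ℝ) ^ (-M)))⁻¹ = Real.sqrt ((j:ℝ) ^ (M:ℝ)) := by
      rw [← Real.sqrt_inv, Real.rpow_neg hj0.le, inv_inv]
    have h4 : max 1 T ≤ Real.sqrt ((j:ℝ) ^ (M:ℝ)) := by
      have h5 : ((max 1 T) ^ ((2:ℝ)/M)) ≤ (j:ℝ) := by
        calc ((max 1 T) ^ ((2:ℝ)/M)) ≤ (j₂:ℝ) := Nat.le_ceil _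
          _ ≤ (j:ℝ) := by
              exact_mod_cast le_trans (le_trans (le_max_right j₁ _) (le_max_right 1 _)) hjge
      have hmax0 : (0:ℝ) < max 1 T := lt_of_lt_of_le one_pos (le_max_left _ _)
      have h6 : ((max 1 T) ^ ((2:ℝ)/M)) ^ (M:ℝ) ≤ (j:ℝ) ^ (M:ℝ) :=
        Real.rpow_le_rpow (by positivity) h5 hM.le
      rw [← Real.rpow_mul hmax0.le] at h6
      rw [show (2:ℝ)/M * M = 2 by field_simp] at h6
      have h7 : (max 1 T) ≤ Real.sqrt ((max 1 T) ^ (2:ℝ)) := by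
        rw [Real.rpow_two, Real.sqrt_sq hmax0.le]
      exact le_trans h7 (Real.sqrt_le_sqrt h6)
    have h8 : Real.sqrt ((j:ℝ) ^ (M:ℝ)) ≤ ε⁻¹ := by rw [← h3]; exact h2
    exact le_trans h4 h8
  have hdT : T ≤ ((1:ℕ) : ℝ) + ε⁻¹ := by
    have : (0:ℝ) ≤ 1 := zero_le_one
    have := le_trans (le_max_right 1 T) hεinv
    push_cast
    linarith
  obtain ⟨N, hN, hratio⟩ := hT 1 le_rfl ε hε0 hε1 hdT
  -- lower bound: j ≤ N
  have hlow : ((j : ℕ) : ℕ∞) ≤ infoN γ lam ε 1 := by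
    have := encard_lower
      {n : Fin 1 → ℕ | (∀ i, 1 ≤ n i) ∧ ε ^ 2 < ∏ i, lamKJ γ lam (i.1 + 1) (n i)}
      (Fin j) (fun k _ => (k : ℕ) + 1) ?_ ?_
    · simpa [infoN] using this
    · intro k k' h
      have := congrFun h 0
      simp at this
      exact Fin.ext this
    · intro k
      constructor
      · intro i; simp
      · rw [Fin.prod_univ_one]
        have hval : (0:Fin 1).1 + 1 = 1 := rfl
        rw [hεsq]
        by_cases hk : (k : ℕ) + 1 = 1
        · simp only [lamKJ, hk, if_pos rfl, Fin.val_zero, if_true]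
          linarith
        · simp only [lamKJ, if_neg hk, Fin.val_zero, zero_add]
          have hk2 : 2 ≤ (k:ℕ) + 1 := by omega
          have hle : (k:ℕ) + 1 ≤ j := k.2
          have hmono : lam j ≤ lam ((k:ℕ)+1) :=
            hlam_anti (Set.mem_Ici.mpr (by omega)) (Set.mem_Ici.mpr hj1) hle
          have : γ 1 * (j:ℝ)^(-M) ≤ γ 1 * lam ((k:ℕ)+1) :=
            mul_le_mul_of_nonneg_left (le_trans hjlam hmono) hγ1.le
          rw [htdef]
          linarith
  rw [hN] at hlow
  have hNge : j ≤ N := by exact_mod_cast hlow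
  -- numerator
  have hnum : Real.log j ≤ Real.log (max 1 (N : ℝ)) := by
    apply Real.log_le_log hj0
    exact le_trans (by exact_mod_cast hNge) (le_max_right _ _)
  -- denominator
  have hlogε : Real.log ε⁻¹ = (1/2) * Real.log 2 + (1/2) * Real.log (γ 1)⁻¹ + M/2 * Real.log j := by
    rw [Real.log_inv, hεdef, Real.log_sqrt ht0.le, htdef,
      Real.log_div (by positivity) (by norm_num), Real.log_mul hγ1.ne' hjM0.ne',
      Real.log_rpow hj0, Real.log_inv]
    ring
  have hden_le : ((1:ℕ):ℝ) + (1 + Real.log ε⁻¹) ≤ M * Real.log j := by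
    rw [hlogε]
    push_cast
    have : 2 * C₀ ≤ M * Real.log j := by
      rw [div_le_iff₀ hM] at hlogj
      linarith
    rw [hC₀def] at this
    linarith
  have hden_pos : (0:ℝ) < ((1:ℕ):ℝ) + (1 + Real.log ε⁻¹) := by
    have : 0 ≤ Real.log ε⁻¹ := Real.log_nonneg ((one_le_inv_iff₀).mpr ⟨hε0, hε1⟩)
    push_cast; linarith
  rw [Real.rpow_one, Real.rpow_one] at hratio
  have hfinal : δ₁ ≤ Real.log (max 1 (N:ℝ)) / (((1:ℕ):ℝ) + (1 + Real.log ε⁻¹)) := by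
    rw [le_div_iff₀ hden_pos]
    calc δ₁ * (((1:ℕ):ℝ) + (1 + Real.log ε⁻¹)) ≤ δ₁ * (M * Real.log j) := by
          apply mul_le_mul_of_nonneg_left hden_le hδ₁.le
      _ = Real.log j := by rw [hδ₁def]; field_simp
      _ ≤ _ := hnum
  linarith

set_option maxHeartbeats 2000000 in
lemma suff (γ lam : ℕ → ℝ)
    (hlam_anti : AntitoneOn lam (Set.Ici 1)) (hlam1 : lam 1 = 1)
    (hlam_nonneg : ∀ j, 1 ≤ j → 0 ≤ lam j)
    (hγ_pos : ∀ j, 1 ≤ j → 0 < γ j) (hγ_le : ∀ j, 1 ≤ j → γ j ≤ 1)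
    (hγ0 : Tendsto γ atTop (nhds 0))
    (hlamdecay : ∀ M : ℝ, 0 < M → ∀ᶠ j : ℕ in atTop, lam j < (j : ℝ) ^ (-M)) :
    ExpSTWT γ lam 1 1 := by
  have hlam_le_one : ∀ j, 1 ≤ j → lam j ≤ 1 := by
    intro j hj
    have := hlam_anti (Set.mem_Ici.mpr le_rfl) (Set.mem_Ici.mpr hj) hj
    rwa [hlam1] at this
  have hkj0 : ∀ k j, 1 ≤ k → 1 ≤ j → 0 ≤ lamKJ γ lam k j := by
    intro k j hk hj
    unfold lamKJ
    split
    · norm_num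
    · exact mul_nonneg (hγ_pos k hk).le (hlam_nonneg j hj)
  have hkj1 : ∀ k j, 1 ≤ k → 1 ≤ j → lamKJ γ lam k j ≤ 1 := by
    intro k j hk hj
    unfold lamKJ
    split
    · norm_num
    · exact mul_le_one₀ (hγ_le k hk) (hlam_nonneg j hj) (hlam_le_one j hj)
  intro δ hδ
  set τ := δ / 8 with hτdef
  clear_value τ
  have hτ : 0 < τ := by rw [hτdef]; positivity
  set M := 2 / τ with hMdef
  clear_value M
  have hM : 0 < M := by rw [hMdef]; positivity
  obtain ⟨J₀, hJ₀⟩ := Filter.eventually_atTop.mp (hlamdecay M hM)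
  set J := max J₀ 2 with hJdef
  have hJ2 : 2 ≤ J := le_max_right _ _
  have hJdecay : ∀ j, J ≤ j → lam j < (j : ℝ) ^ (-M) :=
    fun j hj => hJ₀ j (le_trans (le_max_left _ _) hj)
  set Cτ := (J : ℝ) + 1 with hCτdef
  clear_value Cτ
  have hCτ : 0 < Cτ := by rw [hCτdef]; positivity
  set c := min 1 ((δ / (8 * Cτ)) ^ (τ⁻¹ : ℝ)) with hcdef
  clear_value c
  have hc0 : 0 < c := by
    rw [hcdef]; exact lt_min one_pos (Real.rpow_pos_of_pos (by positivity) _)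
  have hcτ : c ^ (τ : ℝ) ≤ δ / (8 * Cτ) := by
    calc c ^ (τ:ℝ) ≤ ((δ / (8*Cτ)) ^ (τ⁻¹:ℝ)) ^ (τ:ℝ) :=
          Real.rpow_le_rpow hc0.le (hcdef ▸ min_le_right _ _) hτ.le
      _ = δ / (8*Cτ) := by
          rw [← Real.rpow_mul (by positivity), inv_mul_cancel₀ hτ.ne', Real.rpow_one]
  obtain ⟨i₀, hi₀⟩ := Filter.eventually_atTop.mp (hγ0.eventually_le_const hc0)
  set K := Cτ * (i₀:ℝ) with hKdef
  clear_value K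
  have hK0 : 0 ≤ K := by rw [hKdef]; positivity
  set L := 8 * (K + 1) / δ with hLdef
  clear_value L
  have hL0 : 0 < L := by rw [hLdef]; positivity
  refine ⟨2 * max L (Real.exp L), ?_⟩
  intro d hd ε hε0 hε1 hdε
  have hlogε0 : 0 ≤ Real.log ε⁻¹ := Real.log_nonneg ((one_le_inv_iff₀).mpr ⟨hε0, hε1⟩)
  have hd1 : (1:ℝ) ≤ (d:ℝ) := by exact_mod_cast hd
  set D := (d : ℝ) + (1 + Real.log ε⁻¹) with hDdef
  clear_value D
  have hD0 : 0 < D := by rw [hDdef]; linarith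
  have hDL : L ≤ D := by
    rcases le_or_gt (max L (Real.exp L)) (d:ℝ) with h | h
    · have := le_trans (le_max_left L (Real.exp L)) h
      rw [hDdef]; linarith
    · have hεinv : max L (Real.exp L) ≤ ε⁻¹ := by
        by_contra hcon
        push_neg at hcon
        linarith [hdε]
      have h1 : Real.exp L ≤ ε⁻¹ := le_trans (le_max_right _ _) hεinv
      have h2 : L ≤ Real.log ε⁻¹ := by
        have := Real.log_le_log (Real.exp_pos _) h1
        rwa [Real.log_exp] at this
      rw [hDdef]; linarith
  -- the box
  set B := max J ⌈ε ^ ((-2:ℝ) / M)⌉₊ with hBdef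
  have hB2 : 2 ≤ B := le_trans hJ2 (hBdef ▸ le_max_left _ _)
  clear_value B
  have hε2 : ε ^ ((2:ℕ):ℝ) = ε ^ (2:ℕ) := Real.rpow_natCast ε 2
  set S := {n : Fin d → ℕ | (∀ i, 1 ≤ n i) ∧ ε ^ 2 < ∏ i, lamKJ γ lam (i.1 + 1) (n i)}
    with hSdef
  have hsub : S ⊆ ↑(Fintype.piFinset (fun _ : Fin d => Finset.Icc 1 B)) := by
    rintro n ⟨hn1, hnprod⟩
    rw [Finset.mem_coe, Fintype.mem_piFinset]
    intro i
    rw [Finset.mem_Icc]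
    refine ⟨hn1 i, ?_⟩
    by_contra hgt
    push_neg at hgt
    have hfac : ε ^ 2 < lamKJ γ lam (i.1 + 1) (n i) := by
      refine lt_of_lt_of_le hnprod (prod_le_single' ?_ ?_ i)
      · exact fun i' => hkj0 _ _ (Nat.le_add_left 1 _) (hn1 i')
      · exact fun i' => hkj1 _ _ (Nat.le_add_left 1 _) (hn1 i')
    have hni1 : n i ≠ 1 := by omega
    rw [lamKJ, if_neg hni1] at hfac
    have hfac2 : ε ^ 2 < lam (n i) := by
      have h1 : γ (i.1+1) * lam (n i) ≤ lam (n i) :=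
        mul_le_of_le_one_left (hlam_nonneg _ (hn1 i)) (hγ_le _ (Nat.le_add_left 1 _))
      linarith
    have hniJ : J ≤ n i := by omega
    have hdec := hJdecay (n i) hniJ
    -- (n i : ℝ) ≥ ε ^ (-2/M)
    have hxle : ε ^ ((-2:ℝ)/M) ≤ (n i : ℝ) := by
      calc ε ^ ((-2:ℝ)/M) ≤ (⌈ε ^ ((-2:ℝ)/M)⌉₊ : ℝ) := Nat.le_ceil _
        _ ≤ (B : ℝ) := by rw [hBdef]; exact Nat.cast_le.mpr (le_max_right _ _)
        _ ≤ (n i : ℝ) := by exact_mod_cast hgt.le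
    have hni0 : (0:ℝ) < (n i : ℝ) := by exact_mod_cast hn1 i
    have h1 : (ε ^ ((-2:ℝ)/M)) ^ (M:ℝ) ≤ (n i : ℝ) ^ (M:ℝ) :=
      Real.rpow_le_rpow (Real.rpow_pos_of_pos hε0 _).le hxle hM.le
    have h2 : (ε ^ ((-2:ℝ)/M)) ^ (M:ℝ) = ε ^ (-(2:ℝ)) := by
      rw [← Real.rpow_mul hε0.le]
      congr 1
      field_simp
    rw [h2] at h1
    have h3 : (n i : ℝ) ^ (-M) ≤ ε ^ 2 := by
      rw [Real.rpow_neg hni0.le]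
      have h4 : (0:ℝ) < ε ^ (-(2:ℝ)) := Real.rpow_pos_of_pos hε0 _
      have h5 : ((n i : ℝ) ^ (M:ℝ))⁻¹ ≤ (ε ^ (-(2:ℝ)))⁻¹ := inv_anti₀ h4 h1
      have h6 : (ε ^ (-(2:ℝ)))⁻¹ = ε ^ 2 := by
        rw [Real.rpow_neg hε0.le, inv_inv, show ((2:ℝ) = ((2:ℕ):ℝ)) by norm_num, hε2]
      rwa [h6] at h5
    linarith
  have hfin : S.Finite := Set.Finite.subset (Finset.finite_toSet _) hsub
  clear_value S
  refine ⟨hfin.toFinset.card, ?_, ?_⟩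
  · rw [infoN, ← hSdef]
    exact hfin.encard_eq_coe_toFinset_card
  -- counting bound
  set N := hfin.toFinset.card with hNdef
  clear_value N
  set w : (Fin d → ℕ) → ℝ :=
    fun n => ε ^ (-(2*τ)) * ∏ i, (lamKJ γ lam (i.1 + 1) (n i)) ^ (τ:ℝ) with hwdef
  clear_value w
  have hw0 : ∀ n : Fin d → ℕ, (∀ i, 1 ≤ n i) → 0 ≤ w n := by
    intro n hn
    rw [hwdef]
    apply mul_nonneg (Real.rpow_pos_of_pos hε0 _).le
    exact Finset.prod_nonneg fun i _ =>
      Real.rpow_nonneg (hkj0 _ _ (Nat.le_add_left 1 _) (hn i)) _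
  -- 1 ≤ w n on S
  have hwS : ∀ n ∈ hfin.toFinset, (1:ℝ) ≤ w n := by
    intro n hn
    rw [Set.Finite.mem_toFinset, hSdef] at hn
    obtain ⟨hn1, hnprod⟩ := hn
    have hprod0 : 0 ≤ ∏ i, lamKJ γ lam (i.1 + 1) (n i) :=
      Finset.prod_nonneg fun i _ => hkj0 _ _ (Nat.le_add_left 1 _) (hn1 i)
    have hstep : (ε ^ 2 : ℝ) ^ (τ:ℝ) ≤ (∏ i, lamKJ γ lam (i.1 + 1) (n i)) ^ (τ:ℝ) :=
      Real.rpow_le_rpow (by positivity) hnprod.le hτ.le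
    have hprodτ : ∏ i, (lamKJ γ lam (i.1 + 1) (n i)) ^ (τ:ℝ)
        = (∏ i, lamKJ γ lam (i.1 + 1) (n i)) ^ (τ:ℝ) :=
      Real.finset_prod_rpow _ _ (fun i _ => hkj0 _ _ (Nat.le_add_left 1 _) (hn1 i)) _
    have hepsτ : (ε ^ 2 : ℝ) ^ (τ:ℝ) = ε ^ (2*τ) := by
      rw [← hε2, ← Real.rpow_mul hε0.le]
      norm_num
    have key : ε ^ (2*τ) ≤ ∏ i, (lamKJ γ lam (i.1 + 1) (n i)) ^ (τ:ℝ) := by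
      rw [hprodτ, ← hepsτ]; exact hstep
    have hinv : ε ^ (-(2*τ)) * ε ^ (2*τ) = 1 := by
      rw [← Real.rpow_add hε0]; norm_num
    calc (1:ℝ) = ε ^ (-(2*τ)) * ε ^ (2*τ) := hinv.symm
      _ ≤ w n := by
          rw [hwdef]
          exact mul_le_mul_of_nonneg_left key (Real.rpow_pos_of_pos hε0 _).le
  -- main counting bound
  have hNle : (N:ℝ) ≤ ε ^ (-(2*τ)) *
      ∏ i : Fin d, (∑ j ∈ Finset.Icc 1 B, (lamKJ γ lam (i.1+1) j) ^ (τ:ℝ)) := by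
    have hsub' : hfin.toFinset ⊆ Fintype.piFinset (fun _ : Fin d => Finset.Icc 1 B) := by
      rw [Set.Finite.toFinset_subset]; exact hsub
    calc (N:ℝ) = ∑ _n ∈ hfin.toFinset, (1:ℝ) := by
          rw [Finset.sum_const, hNdef]; simp
      _ ≤ ∑ n ∈ hfin.toFinset, w n := Finset.sum_le_sum hwS
      _ ≤ ∑ n ∈ Fintype.piFinset (fun _ : Fin d => Finset.Icc 1 B), w n := by
          refine Finset.sum_le_sum_of_subset_of_nonneg hsub' (fun n hn _ => hw0 n (fun i => ?_))
          have := Fintype.mem_piFinset.mp hn i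
          rw [Finset.mem_Icc] at this
          exact this.1
      _ = ε ^ (-(2*τ)) * ∑ n ∈ Fintype.piFinset (fun _ : Fin d => Finset.Icc 1 B),
            ∏ i, (lamKJ γ lam (i.1+1) (n i)) ^ (τ:ℝ) := by
          rw [hwdef, ← Finset.mul_sum]
      _ = _ := by rw [Finset.prod_univ_sum]
  have hicc : Finset.Icc 1 B = insert 1 (Finset.Icc 2 B) := by
    ext j; simp only [Finset.mem_Icc, Finset.mem_insert]; omega
  have hsum2 : ∑ j ∈ Finset.Icc 2 B, (lam j) ^ (τ:ℝ) ≤ Cτ := by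
    have hterm : ∀ j ∈ Finset.Icc 2 B,
        (lam j) ^ (τ:ℝ) ≤ (if j < J then (1:ℝ) else 0) + ((j:ℝ)^2)⁻¹ := by
      intro j hj
      rw [Finset.mem_Icc] at hj
      have hj1 : 1 ≤ j := by omega
      by_cases hjJ : j < J
      · rw [if_pos hjJ]
        have h1 : (lam j)^(τ:ℝ) ≤ 1 :=
          Real.rpow_le_one (hlam_nonneg j hj1) (hlam_le_one j hj1) hτ.le
        have h2 : (0:ℝ) ≤ ((j:ℝ)^2)⁻¹ := by positivity
        linarith
      · rw [if_neg hjJ]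
        push_neg at hjJ
        have hj0 : (0:ℝ) < (j:ℝ) := by exact_mod_cast hj1
        have hdec := hJdecay j hjJ
        have h1 : (lam j)^(τ:ℝ) ≤ ((j:ℝ)^(-M))^(τ:ℝ) :=
          Real.rpow_le_rpow (hlam_nonneg j hj1) hdec.le hτ.le
        have h2 : ((j:ℝ)^(-M))^(τ:ℝ) = (j:ℝ)^(-(2:ℝ)) := by
          rw [← Real.rpow_mul hj0.le]
          congr 1
          rw [hMdef]
          field_simp
        have h3 : (j:ℝ)^(-(2:ℝ)) = ((j:ℝ)^2)⁻¹ := by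
          rw [Real.rpow_neg hj0.le, show ((2:ℝ) = ((2:ℕ):ℝ)) by norm_num, Real.rpow_natCast]
        rw [h2, h3] at h1
        linarith
    have e1 : (∑ j ∈ Finset.Icc 2 B, if j < J then (1:ℝ) else 0)
        = (((Finset.Icc 2 B).filter (fun j => j < J)).card : ℝ) := by
      rw [Finset.sum_ite, Finset.sum_const, Finset.sum_const]
      simp
    have e2 : (((Finset.Icc 2 B).filter (fun j => j < J)).card : ℝ) ≤ (J:ℝ) := by
      have hss : (Finset.Icc 2 B).filter (fun j => j < J) ⊆ Finset.range J := by
        intro j hj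
        rw [Finset.mem_filter] at hj
        exact Finset.mem_range.mpr hj.2
      have := Finset.card_le_card hss
      rw [Finset.card_range] at this
      exact_mod_cast this
    have e3 := sum_sq_inv_le B
    calc ∑ j ∈ Finset.Icc 2 B, (lam j)^(τ:ℝ)
        ≤ ∑ j ∈ Finset.Icc 2 B, ((if j < J then (1:ℝ) else 0) + ((j:ℝ)^2)⁻¹) :=
          Finset.sum_le_sum hterm
      _ = (∑ j ∈ Finset.Icc 2 B, if j < J then (1:ℝ) else 0)
            + ∑ j ∈ Finset.Icc 2 B, ((j:ℝ)^2)⁻¹ := Finset.sum_add_distrib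
      _ ≤ Cτ := by rw [e1, hCτdef]; linarith
  have hinner : ∀ i : Fin d, ∑ j ∈ Finset.Icc 1 B, (lamKJ γ lam (i.1+1) j)^(τ:ℝ)
      ≤ 1 + (γ (i.1+1))^(τ:ℝ) * Cτ := by
    intro i
    rw [hicc, Finset.sum_insert (by simp [Finset.mem_Icc])]
    have hγi : 0 < γ (i.1+1) := hγ_pos _ (Nat.le_add_left 1 _)
    have e0 : (lamKJ γ lam (i.1+1) 1)^(τ:ℝ) = 1 := by
      rw [lamKJ, if_pos rfl, Real.one_rpow]
    have e1 : ∀ j ∈ Finset.Icc 2 B,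
        (lamKJ γ lam (i.1+1) j)^(τ:ℝ) = (γ (i.1+1))^(τ:ℝ) * (lam j)^(τ:ℝ) := by
      intro j hj
      rw [Finset.mem_Icc] at hj
      rw [lamKJ, if_neg (by omega), Real.mul_rpow hγi.le (hlam_nonneg j (by omega))]
    rw [e0, Finset.sum_congr rfl e1, ← Finset.mul_sum]
    have := mul_le_mul_of_nonneg_left hsum2 (Real.rpow_nonneg hγi.le (τ:ℝ))
    linarith
  have hprodbound : ∏ i : Fin d, (∑ j ∈ Finset.Icc 1 B, (lamKJ γ lam (i.1+1) j)^(τ:ℝ))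
      ≤ Real.exp (Cτ * ((d:ℝ) * c^(τ:ℝ) + (i₀:ℝ))) := by
    have hstep1 : ∏ i : Fin d, (∑ j ∈ Finset.Icc 1 B, (lamKJ γ lam (i.1+1) j)^(τ:ℝ))
        ≤ ∏ i : Fin d, (1 + (γ (i.1+1))^(τ:ℝ) * Cτ) := by
      apply Finset.prod_le_prod
      · intro i _
        apply Finset.sum_nonneg
        intro j hj
        rw [Finset.mem_Icc] at hj
        exact Real.rpow_nonneg (hkj0 _ _ (Nat.le_add_left 1 _) hj.1) _
      · exact fun i _ => hinner i
    have hstep2 : ∏ i : Fin d, (1 + (γ (i.1+1))^(τ:ℝ) * Cτ)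
        ≤ ∏ i : Fin d, Real.exp ((γ (i.1+1))^(τ:ℝ) * Cτ) := by
      apply Finset.prod_le_prod
      · intro i _
        have : (0:ℝ) ≤ (γ (i.1+1))^(τ:ℝ) * Cτ :=
          mul_nonneg (Real.rpow_nonneg (hγ_pos _ (Nat.le_add_left 1 _)).le _) hCτ.le
        linarith
      · intro i _
        have := Real.add_one_le_exp ((γ (i.1+1))^(τ:ℝ) * Cτ)
        linarith
    have hstep3 : ∏ i : Fin d, Real.exp ((γ (i.1+1))^(τ:ℝ) * Cτ)
        = Real.exp (∑ i : Fin d, (γ (i.1+1))^(τ:ℝ) * Cτ) := (Real.exp_sum _ _).symm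
    have hsumγ : ∑ i : Fin d, (γ (i.1+1))^(τ:ℝ) ≤ (d:ℝ) * c^(τ:ℝ) + (i₀:ℝ) := by
      rw [Fin.sum_univ_eq_sum_range (fun i => (γ (i+1))^(τ:ℝ)) d]
      have hterm2 : ∀ i ∈ Finset.range d,
          (γ (i+1))^(τ:ℝ) ≤ c^(τ:ℝ) + (if i + 1 < i₀ then (1:ℝ) else 0) := by
        intro i _
        have hγi : 0 < γ (i+1) := hγ_pos _ (Nat.le_add_left 1 _)
        by_cases h : i + 1 < i₀
        · rw [if_pos h]
          have h1 : (γ (i+1))^(τ:ℝ) ≤ 1 :=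
            Real.rpow_le_one hγi.le (hγ_le _ (Nat.le_add_left 1 _)) hτ.le
          have h2 : (0:ℝ) ≤ c^(τ:ℝ) := Real.rpow_nonneg hc0.le _
          linarith
        · rw [if_neg h]
          push_neg at h
          have h1 : γ (i+1) ≤ c := hi₀ (i+1) h
          have := Real.rpow_le_rpow hγi.le h1 hτ.le
          linarith
      have e4 : (∑ i ∈ Finset.range d, if i + 1 < i₀ then (1:ℝ) else 0) ≤ (i₀:ℝ) := by
        rw [Finset.sum_ite, Finset.sum_const, Finset.sum_const]
        simp only [nsmul_eq_mul, mul_one, mul_zero, add_zero]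
        have hss : (Finset.range d).filter (fun i => i + 1 < i₀) ⊆ Finset.range i₀ := by
          intro i hi
          rw [Finset.mem_filter] at hi
          exact Finset.mem_range.mpr (by omega)
        have := Finset.card_le_card hss
        rw [Finset.card_range] at this
        exact_mod_cast this
      calc ∑ i ∈ Finset.range d, (γ (i+1))^(τ:ℝ)
          ≤ ∑ i ∈ Finset.range d, (c^(τ:ℝ) + (if i + 1 < i₀ then (1:ℝ) else 0)) :=
            Finset.sum_le_sum hterm2
        _ = (d:ℝ) * c^(τ:ℝ) + ∑ i ∈ Finset.range d, (if i + 1 < i₀ then (1:ℝ) else 0) := by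
            rw [Finset.sum_add_distrib, Finset.sum_const, Finset.card_range, nsmul_eq_mul]
        _ ≤ _ := by linarith
    calc ∏ i : Fin d, (∑ j ∈ Finset.Icc 1 B, (lamKJ γ lam (i.1+1) j)^(τ:ℝ))
        ≤ ∏ i : Fin d, Real.exp ((γ (i.1+1))^(τ:ℝ) * Cτ) := le_trans hstep1 hstep2
      _ = Real.exp (∑ i : Fin d, (γ (i.1+1))^(τ:ℝ) * Cτ) := hstep3
      _ ≤ Real.exp (Cτ * ((d:ℝ) * c^(τ:ℝ) + (i₀:ℝ))) := by
          rw [Real.exp_le_exp, ← Finset.sum_mul]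
          calc (∑ i : Fin d, (γ (i.1+1))^(τ:ℝ)) * Cτ
              ≤ ((d:ℝ) * c^(τ:ℝ) + (i₀:ℝ)) * Cτ :=
                mul_le_mul_of_nonneg_right hsumγ hCτ.le
            _ = Cτ * ((d:ℝ) * c^(τ:ℝ) + (i₀:ℝ)) := mul_comm _ _
  have hNR : (N:ℝ) ≤ ε ^ (-(2*τ)) * Real.exp (Cτ * ((d:ℝ) * c^(τ:ℝ) + (i₀:ℝ))) :=
    le_trans hNle (mul_le_mul_of_nonneg_left hprodbound (Real.rpow_pos_of_pos hε0 _).le)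
  have hR1 : (1:ℝ) ≤ ε ^ (-(2*τ)) * Real.exp (Cτ * ((d:ℝ) * c^(τ:ℝ) + (i₀:ℝ))) := by
    have h1 : (1:ℝ) ≤ ε ^ (-(2*τ)) := by
      have := Real.rpow_le_rpow_of_exponent_ge hε0 hε1 (by linarith : -(2*τ) ≤ 0)
      rwa [Real.rpow_zero] at this
    have h2 : (1:ℝ) ≤ Real.exp (Cτ * ((d:ℝ) * c^(τ:ℝ) + (i₀:ℝ))) := by
      apply Real.one_le_exp
      have : (0:ℝ) ≤ c^(τ:ℝ) := Real.rpow_nonneg hc0.le _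
      have hd0 : (0:ℝ) ≤ (d:ℝ) := by positivity
      have hi00 : (0:ℝ) ≤ (i₀:ℝ) := by positivity
      positivity
    nlinarith
  have hlogmax : Real.log (max 1 (N:ℝ)) ≤ 2*τ*Real.log ε⁻¹ + Cτ * ((d:ℝ) * c^(τ:ℝ) + (i₀:ℝ)) := by
    have h1 : max 1 (N:ℝ) ≤ ε ^ (-(2*τ)) * Real.exp (Cτ * ((d:ℝ) * c^(τ:ℝ) + (i₀:ℝ))) :=
      max_le hR1 hNR
    have h2 := Real.log_le_log (by positivity) h1
    rw [Real.log_mul (Real.rpow_pos_of_pos hε0 _).ne' (Real.exp_pos _).ne',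
      Real.log_rpow hε0, Real.log_exp] at h2
    rw [Real.log_inv]
    linarith
  -- final arithmetic
  have hCc : Cτ * c^(τ:ℝ) ≤ δ/8 := by
    have h1 := mul_le_mul_of_nonneg_left hcτ hCτ.le
    have h2 : Cτ * (δ / (8*Cτ)) = δ/8 := by field_simp
    linarith
  have hKD : K + 1 ≤ δ/8 * D := by
    have h1 : δ/8 * L = K + 1 := by
      rw [hLdef]
      field_simp
    have h2 := mul_le_mul_of_nonneg_left hDL (by positivity : (0:ℝ) ≤ δ/8)
    linarith
  have ht1 : 2*τ*Real.log ε⁻¹ ≤ δ/4 * D := by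
    have h1 : 2*τ = δ/4 := by rw [hτdef]; ring
    have h2 : Real.log ε⁻¹ ≤ D := by rw [hDdef]; linarith
    have := mul_le_mul_of_nonneg_left h2 (by positivity : (0:ℝ) ≤ δ/4)
    rw [h1]
    linarith
  have ht2 : Cτ * ((d:ℝ) * c^(τ:ℝ)) ≤ δ/8 * D := by
    have hdD : (d:ℝ) ≤ D := by rw [hDdef]; linarith
    have h1 : Cτ * ((d:ℝ) * c^(τ:ℝ)) = (Cτ * c^(τ:ℝ)) * (d:ℝ) := by ring
    have h2 : (Cτ * c^(τ:ℝ)) * (d:ℝ) ≤ (δ/8) * (d:ℝ) := by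
      apply mul_le_mul_of_nonneg_right hCc (by positivity)
    have h3 : (δ/8) * (d:ℝ) ≤ (δ/8) * D :=
      mul_le_mul_of_nonneg_left hdD (by positivity)
    linarith
  have ht3 : Cτ * (i₀:ℝ) ≤ δ/8 * D := by
    rw [← hKdef]
    linarith
  rw [Real.rpow_one, Real.rpow_one, ← hDdef, div_lt_iff₀ hD0]
  have hexpand : Cτ * ((d:ℝ) * c^(τ:ℝ) + (i₀:ℝ))
      = Cτ * ((d:ℝ) * c^(τ:ℝ)) + Cτ * (i₀:ℝ) := by ring
  have hhalf : Real.log (max 1 (N:ℝ)) ≤ δ/2 * D := by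
    rw [hexpand] at hlogmax
    linarith
  have hlt : δ/2 * D < δ * D := by nlinarith
  linarith

/-- EXP-WT holds iff γ_j → 0 and (log λ_j⁻¹)/log j → ∞, the latter meaning
that for every M > 0 one has λ_j < j^(-M) for all sufficiently large j. -/
theorem stmt3 (γ lam : ℕ → ℝ)
    (hlam_anti : AntitoneOn lam (Set.Ici 1)) (hlam1 : lam 1 = 1) (hlam2 : 0 < lam 2)
    (hlam_nonneg : ∀ j, 1 ≤ j → 0 ≤ lam j)
    (hγ_anti : AntitoneOn γ (Set.Ici 1))
    (hγ_pos : ∀ j, 1 ≤ j → 0 < γ j) (hγ_le : ∀ j, 1 ≤ j → γ j ≤ 1) :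
    ExpSTWT γ lam 1 1 ↔
      (Tendsto γ atTop (nhds 0) ∧
        ∀ M : ℝ, 0 < M → ∀ᶠ j : ℕ in atTop, lam j < (j : ℝ) ^ (-M)) := by
  constructor
  · intro hwt
    exact ⟨nec_gamma γ lam hlam_anti hlam1 hlam2 hγ_anti hγ_pos hγ_le hwt,
      fun M hM => nec_lam γ lam hlam_anti hlam1 hlam_nonneg hγ_pos hγ_le hwt M hM⟩
  · rintro ⟨hγ0, hdecay⟩
    exact suff γ lam hlam_anti hlam1 hlam_nonneg hγ_pos hγ_le hγ0 hdecay
end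
end
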